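/- arXiv:1612.04638 — 8 statements merged into one kernel-verified Lean document; each statement's English description precedes it below -/
import Mathlib

section
/- Let Z0 be a smooth nowhere-vanishing vector field on an open set U ⊆ ℝ³. Then the following are equivalent: (i) at every point p ∈ U the vector ∇_{Z0}Z0(p) is a scalar multiple of Z0(p); (ii) every integral curve of Z0 in U, i.e. every differentiable curve γ : I → U on an open interval I with γ'(t) = Z0(γ(t)) for all t ∈ I, has its image contained in an affine line of ℝ³. -/
noncomputable section

/-- Partial derivative `∂f/∂xⁱ` at `p`. -/
def pd (i : Fin 3) (f : (Fin 3 → ℝ) → ℝ) (p : Fin 3 → ℝ) : ℝ :=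
  fderiv ℝ f p (Pi.single i 1)

/-- Gradient of a scalar function. -/
def grad (f : (Fin 3 → ℝ) → ℝ) (p : Fin 3 → ℝ) : Fin 3 → ℝ :=
  fun i => pd i f p

/-- Directional derivative `Σᵢ vⁱ ∂f/∂xⁱ` of `f` along the vector `v` at `p`. -/
def dd (v : Fin 3 → ℝ) (f : (Fin 3 → ℝ) → ℝ) (p : Fin 3 → ℝ) : ℝ :=
  ∑ i, v i * pd i f p

/-- `(∇_W W)ⁱ = Σⱼ Wʲ ∂Wⁱ/∂xʲ`. -/
def nab (W : (Fin 3 → ℝ) → (Fin 3 → ℝ)) (p : Fin 3 → ℝ) : Fin 3 → ℝ :=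
  fun i => ∑ j, W p j * pd j (fun q => W q i) p

/-- Euclidean cross product on `ℝ³`. -/
def cross (a b : Fin 3 → ℝ) : Fin 3 → ℝ :=
  ![a 1 * b 2 - a 2 * b 1, a 2 * b 0 - a 0 * b 2, a 0 * b 1 - a 1 * b 0]

/-- `g(v,w) = Σᵢⱼ gᵢⱼ vⁱ wʲ`. -/
def gB (g : Matrix (Fin 3) (Fin 3) ℝ) (v w : Fin 3 → ℝ) : ℝ :=
  ∑ i, ∑ j, g i j * v i * w j

/-- Lie bracket of vector fields: `[V,W]ⁱ = Σⱼ (Vʲ ∂Wⁱ/∂xʲ − Wʲ ∂Vⁱ/∂xʲ)`. -/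
def lieB (V W : (Fin 3 → ℝ) → (Fin 3 → ℝ)) (p : Fin 3 → ℝ) : Fin 3 → ℝ :=
  fun i => ∑ j, (V p j * pd j (fun q => W q i) p - W p j * pd j (fun q => V q i) p)

/-- curl of a vector field on `ℝ³`. -/
def curl (a : (Fin 3 → ℝ) → (Fin 3 → ℝ)) (p : Fin 3 → ℝ) : Fin 3 → ℝ :=
  ![pd 1 (fun q => a q 2) p - pd 2 (fun q => a q 1) p,
    pd 2 (fun q => a q 0) p - pd 0 (fun q => a q 2) p,
    pd 0 (fun q => a q 1) p - pd 1 (fun q => a q 0) p]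

/-- divergence of a vector field. -/
def divg (W : (Fin 3 → ℝ) → (Fin 3 → ℝ)) (p : Fin 3 → ℝ) : ℝ :=
  ∑ i, pd i (fun q => W q i) p

/-- Euclidean inner product on `ℝ³`. -/
def ip (a b : Fin 3 → ℝ) : ℝ := ∑ i, a i * b i


open Set

section Helpers

lemma ip_pos {b : Fin 3 → ℝ} (hb : b ≠ 0) : 0 < ip b b := by
  have hex : ∃ i, b i ≠ 0 := by
    by_contra hc
    push_neg at hc
    exact hb (funext hc)
  obtain ⟨i, hi⟩ := hex
  exact Finset.sum_pos' (fun j _ => mul_self_nonneg _)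
    ⟨i, Finset.mem_univ i, mul_self_pos.mpr hi⟩

lemma ip_smul_left (c : ℝ) (a b : Fin 3 → ℝ) : ip (c • a) b = c * ip a b := by
  simp [ip, Finset.mul_sum, mul_assoc]

lemma crossSelf (a : Fin 3 → ℝ) : cross a a = 0 := by
  funext i; fin_cases i <;> simp [cross] <;> ring

lemma crossSmulLeft (c : ℝ) (a b : Fin 3 → ℝ) : cross (c • a) b = c • cross a b := by
  funext i; fin_cases i <;> simp [cross] <;> ring

lemma eq_smul_of_cross_eq_zero {a b : Fin 3 → ℝ} (hb : b ≠ 0) (h : cross a b = 0) :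
    a = (ip a b / ip b b) • b := by
  have hbb := ip_pos hb
  have h0 := congrFun h 0
  have h1 := congrFun h 1
  have h2 := congrFun h 2
  simp [cross, sub_eq_zero] at h0 h1 h2
  have hip : ip a b = a 0 * b 0 + a 1 * b 1 + a 2 * b 2 := by simp [ip, Fin.sum_univ_three]
  have hipb : ip b b = b 0 * b 0 + b 1 * b 1 + b 2 * b 2 := by simp [ip, Fin.sum_univ_three]
  have hne := hbb.ne'
  funext i
  fin_cases i
  · show a 0 = ip a b / ip b b * b 0
    rw [div_mul_eq_mul_div, eq_div_iff hne, hip, hipb]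
    linear_combination b 1 * h2 - b 2 * h1
  · show a 1 = ip a b / ip b b * b 1
    rw [div_mul_eq_mul_div, eq_div_iff hne, hip, hipb]
    linear_combination b 2 * h0 - b 0 * h2
  · show a 2 = ip a b / ip b b * b 2
    rw [div_mul_eq_mul_div, eq_div_iff hne, hip, hipb]
    linear_combination b 0 * h1 - b 1 * h0

lemma nab_eq_fderiv (Z0 : (Fin 3 → ℝ) → (Fin 3 → ℝ)) {p : Fin 3 → ℝ}
    (h : DifferentiableAt ℝ Z0 p) : nab Z0 p = fderiv ℝ Z0 p (Z0 p) := by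
  have hcomp : ∀ i j : Fin 3, pd j (fun q => Z0 q i) p = fderiv ℝ Z0 p (Pi.single j 1) i := by
    intro i j
    have hF : HasFDerivAt (fun q => Z0 q i)
        (((ContinuousLinearMap.proj i : (Fin 3 → ℝ) →L[ℝ] ℝ)).comp (fderiv ℝ Z0 p)) p :=
      (ContinuousLinearMap.proj i : (Fin 3 → ℝ) →L[ℝ] ℝ).hasFDerivAt.comp p h.hasFDerivAt
    simp [pd, hF.fderiv]
  funext i
  simp only [nab, hcomp]
  have hx : Z0 p = ∑ j, Z0 p j • (Pi.single j 1 : Fin 3 → ℝ) := by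
    funext k
    simp [Finset.sum_apply, Pi.single_apply]
  conv_rhs => rw [hx, map_sum]
  simp [Finset.sum_apply]

lemma hasDerivAt_Z0_comp {U : Set (Fin 3 → ℝ)} (hU : IsOpen U)
    {Z0 : (Fin 3 → ℝ) → (Fin 3 → ℝ)} (hZ0 : ContDiffOn ℝ (⊤ : ℕ∞) Z0 U)
    {γ : ℝ → Fin 3 → ℝ} {t : ℝ} (hmem : γ t ∈ U) (hγ : HasDerivAt γ (Z0 (γ t)) t) :
    HasDerivAt (fun s => Z0 (γ s)) (nab Z0 (γ t)) t := by
  have hd : DifferentiableAt ℝ Z0 (γ t) :=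
    (hZ0.contDiffAt (hU.mem_nhds hmem)).differentiableAt (by simp)
  have := hd.hasFDerivAt.comp_hasDerivAt t hγ
  rw [nab_eq_fderiv Z0 hd]
  exact this

lemma hasDerivAt_cross {f f' : ℝ → Fin 3 → ℝ} {t : ℝ} (hf : HasDerivAt f (f' t) t)
    (d : Fin 3 → ℝ) :
    HasDerivAt (fun s => cross (f s) d) (cross (f' t) d) t := by
  have h := hasDerivAt_pi.mp hf
  rw [hasDerivAt_pi]
  intro i
  fin_cases i <;> simp only [cross, Matrix.cons_val_zero, Matrix.cons_val_one, Matrix.head_cons,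
    Matrix.cons_val_two, Matrix.tail_cons]
  · exact ((h 1).mul_const _).sub ((h 2).mul_const _)
  · exact ((h 2).mul_const _).sub ((h 0).mul_const _)
  · exact ((h 0).mul_const _).sub ((h 1).mul_const _)

lemma hasDerivAt_ip_left {f : ℝ → Fin 3 → ℝ} {v : Fin 3 → ℝ} {t : ℝ}
    (hf : HasDerivAt f v t) (d : Fin 3 → ℝ) :
    HasDerivAt (fun s => ip (f s) d) (ip v d) t := by
  have h := hasDerivAt_pi.mp hf
  unfold ip
  exact HasDerivAt.fun_sum fun i _ => (h i).mul_const (d i)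

lemma continuousOn_ip {X : Type*} [TopologicalSpace X] {s : Set X} {f g : X → Fin 3 → ℝ}
    (hf : ContinuousOn f s) (hg : ContinuousOn g s) :
    ContinuousOn (fun x => ip (f x) (g x)) s := by
  unfold ip
  apply continuousOn_finset_sum
  intro i _
  exact ((continuous_apply i).comp_continuousOn hf).mul
    ((continuous_apply i).comp_continuousOn hg)

lemma continuousOn_nab {U : Set (Fin 3 → ℝ)} (hU : IsOpen U)
    {Z0 : (Fin 3 → ℝ) → (Fin 3 → ℝ)} (hZ0 : ContDiffOn ℝ (⊤ : ℕ∞) Z0 U) :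
    ContinuousOn (nab Z0) U := by
  have hfd : ContinuousOn (fderiv ℝ Z0) U :=
    hZ0.continuousOn_fderiv_of_isOpen hU (by exact_mod_cast le_top)
  have h : ContinuousOn (fun p => fderiv ℝ Z0 p (Z0 p)) U :=
    hfd.clm_apply hZ0.continuousOn
  exact h.congr fun p hp => nab_eq_fderiv Z0
    ((hZ0.contDiffAt (hU.mem_nhds hp)).differentiableAt (by simp))

lemma gron_zero {w g' : ℝ → Fin 3 → ℝ} {K c d : ℝ}
    (hw : ∀ t ∈ Icc c d, HasDerivAt w (g' t) t)
    (hbound : ∀ t ∈ Ico c d, ‖g' t‖ ≤ K * ‖w t‖)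
    (h0 : w c = 0) : ∀ x ∈ Icc c d, w x = 0 := by
  intro x hx
  have hcont : ContinuousOn w (Icc c d) := fun t ht =>
    (hw t ht).continuousAt.continuousWithinAt
  have h := norm_le_gronwallBound_of_norm_deriv_right_le (f' := g') (δ := 0) (K := K) (ε := 0)
    hcont (fun t ht => (hw t (Ico_subset_Icc_self ht)).hasDerivWithinAt)
    (by simp [h0]) (fun t ht => by simpa using hbound t ht) x hx
  rw [gronwallBound_ε0] at h
  simp only [zero_mul] at h
  exact norm_le_zero_iff.mp h

lemma zero_on_Icc {w : ℝ → Fin 3 → ℝ} {k : ℝ → ℝ} {a b t₀ : ℝ}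
    (hk : ContinuousOn k (Icc a b)) (ht₀ : t₀ ∈ Icc a b)
    (hw : ∀ t ∈ Icc a b, HasDerivAt w (k t • w t) t) (h0 : w t₀ = 0) :
    ∀ t ∈ Icc a b, w t = 0 := by
  obtain ⟨K, hK⟩ := isCompact_Icc.exists_bound_of_continuousOn hk
  have hsub1 : Icc t₀ b ⊆ Icc a b := Icc_subset_Icc ht₀.1 le_rfl
  have hright : ∀ t ∈ Icc t₀ b, w t = 0 :=
    gron_zero (fun t ht => hw t (hsub1 ht))
      (fun t ht => by
        rw [norm_smul]
        exact mul_le_mul_of_nonneg_right (hK t (hsub1 (Ico_subset_Icc_self ht)))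
          (norm_nonneg _)) h0
  have hsub2 : Icc a t₀ ⊆ Icc a b := Icc_subset_Icc le_rfl ht₀.2
  have hrefl : ∀ s ∈ Icc a t₀, a + t₀ - s ∈ Icc a t₀ := by
    intro s hs
    constructor <;> [linarith [hs.2]; linarith [hs.1]]
  have hleft : ∀ s ∈ Icc a t₀, w (a + t₀ - s) = 0 := by
    apply gron_zero (g' := fun s => (-1 : ℝ) • (k (a + t₀ - s) • w (a + t₀ - s))) (K := K)
    · intro s hs
      have hg : HasDerivAt (fun s : ℝ => a + t₀ - s) (-1) s := by
        simpa using (hasDerivAt_id s).const_sub (a + t₀)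
      exact (hw _ (hsub2 (hrefl s hs))).scomp s hg
    · intro s hs
      rw [norm_smul, norm_smul]
      simp only [norm_neg, norm_one, one_mul]
      exact mul_le_mul_of_nonneg_right
        (hK _ (hsub2 (hrefl s (Ico_subset_Icc_self hs)))) (norm_nonneg _)
    · simpa using h0
  intro t ht
  rcases le_total t₀ t with hc | hc
  · exact hright t ⟨hc, ht.2⟩
  · have := hleft (a + t₀ - t) (hrefl t ⟨ht.1, hc⟩)
    simpa using this

lemma const_on_Icc {f : ℝ → Fin 3 → ℝ} {a b : ℝ}
    (hf : ∀ t ∈ Icc a b, HasDerivAt f 0 t) : ∀ x ∈ Icc a b, f x = f a :=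
  constant_of_has_deriv_right_zero
    (fun t ht => (hf t ht).continuousAt.continuousWithinAt)
    (fun t ht => (hf t (Ico_subset_Icc_self ht)).hasDerivWithinAt)

end Helpers

set_option linter.unusedVariables false

/-- For a smooth nowhere-vanishing vector field `Z0` on an open set `U ⊆ ℝ³`,
`∇_{Z0}Z0` is pointwise a scalar multiple of `Z0` iff every integral curve of `Z0` in `U`
(defined on an open interval) has its image contained in an affine line of `ℝ³`. -/
theorem szebehely_straight_lines
    (U : Set (Fin 3 → ℝ)) (hU : IsOpen U)
    (Z0 : (Fin 3 → ℝ) → (Fin 3 → ℝ)) (hZ0 : ContDiffOn ℝ (⊤ : ℕ∞) Z0 U)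
    (hnz : ∀ p ∈ U, Z0 p ≠ 0) :
    (∀ p ∈ U, ∃ ρ : ℝ, nab Z0 p = ρ • Z0 p) ↔
      (∀ (I : Set ℝ) (γ : ℝ → (Fin 3 → ℝ)), IsOpen I → IsPreconnected I →
        (∀ t ∈ I, γ t ∈ U) → (∀ t ∈ I, HasDerivAt γ (Z0 (γ t)) t) →
        ∃ q d : Fin 3 → ℝ, d ≠ 0 ∧ ∀ t ∈ I, ∃ s : ℝ, γ t = q + s • d) := by
  constructor
  · -- forward: nab parallel ⇒ straight lines
    intro h I γ hIopen hIconn hmemU hderiv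
    rcases I.eq_empty_or_nonempty with hI | ⟨t₀, ht₀⟩
    · refine ⟨0, Pi.single 0 1, ?_,
        fun t ht => by rw [hI] at ht; exact absurd ht (notMem_empty t)⟩
      intro hh
      have := congrFun hh 0
      simp [Pi.single_eq_same] at this
    · set d := Z0 (γ t₀) with hd_def
      have hd : d ≠ 0 := hnz _ (hmemU t₀ ht₀)
      have hOrd : OrdConnected I := hIconn.ordConnected
      have hγcont : ContinuousOn γ I := fun t ht =>
        (hderiv t ht).continuousAt.continuousWithinAt
      set ρ : (Fin 3 → ℝ) → ℝ := fun p => ip (nab Z0 p) (Z0 p) / ip (Z0 p) (Z0 p) with hρ_def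
      have hρ : ∀ p ∈ U, nab Z0 p = ρ p • Z0 p := by
        intro p hp
        obtain ⟨r, hr⟩ := h p hp
        have hpz := (ip_pos (hnz p hp)).ne'
        have hrρ : ρ p = r := by
          rw [hρ_def]
          simp only
          rw [hr, ip_smul_left, mul_div_assoc, div_self hpz, mul_one]
        rw [hrρ, hr]
      have hρcont : ContinuousOn ρ U :=
        (continuousOn_ip (continuousOn_nab hU hZ0) hZ0.continuousOn).div
          (continuousOn_ip hZ0.continuousOn hZ0.continuousOn)
          (fun p hp => (ip_pos (hnz p hp)).ne')
      have hw0 : ∀ t ∈ I, cross (Z0 (γ t)) d = 0 := by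
        intro t ht
        have hminI : min t₀ t ∈ I := by
          rcases le_total t₀ t with hc | hc
          · rwa [min_eq_left hc]
          · rwa [min_eq_right hc]
        have hmaxI : max t₀ t ∈ I := by
          rcases le_total t₀ t with hc | hc
          · rwa [max_eq_right hc]
          · rwa [max_eq_left hc]
        have hIccI : Icc (min t₀ t) (max t₀ t) ⊆ I := hOrd.out hminI hmaxI
        refine zero_on_Icc (w := fun s => cross (Z0 (γ s)) d) (k := fun s => ρ (γ s))
          (a := min t₀ t) (b := max t₀ t) (t₀ := t₀) ?_
          ⟨min_le_left t₀ t, le_max_left t₀ t⟩ ?_ ?_ t ⟨min_le_right t₀ t, le_max_right t₀ t⟩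
        · exact (hρcont.comp hγcont (fun s hs => hmemU s hs)).mono hIccI
        · intro s hs
          have h1 : HasDerivAt (fun u => Z0 (γ u)) (nab Z0 (γ s)) s :=
            hasDerivAt_Z0_comp hU hZ0 (hmemU s (hIccI hs)) (hderiv s (hIccI hs))
          have h2 : HasDerivAt (fun u => cross (Z0 (γ u)) d)
              (cross ((fun u => nab Z0 (γ u)) s) d) s :=
            hasDerivAt_cross (f' := fun u => nab Z0 (γ u)) h1 d
          simp only at h2
          rw [hρ _ (hmemU s (hIccI hs)), crossSmulLeft] at h2
          exact h2
        · rw [hd_def]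
          exact crossSelf _
      have hpar : ∀ t ∈ I, Z0 (γ t) = (ip (Z0 (γ t)) d / ip d d) • d := fun t ht =>
        eq_smul_of_cross_eq_zero hd (hw0 t ht)
      refine ⟨γ t₀, d, hd, fun t ht => ⟨ip (γ t - γ t₀) d / ip d d, ?_⟩⟩
      set f : ℝ → Fin 3 → ℝ := fun s => γ s - (ip (γ s - γ t₀) d / ip d d) • d with hf_def
      have hf' : ∀ s ∈ I, HasDerivAt f 0 s := by
        intro s hs
        have h1 : HasDerivAt (fun u => γ u - γ t₀) (Z0 (γ s)) s := (hderiv s hs).sub_const _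
        have h2 : HasDerivAt (fun u => ip (γ u - γ t₀) d) (ip (Z0 (γ s)) d) s :=
          hasDerivAt_ip_left h1 d
        have h3 : HasDerivAt (fun u => (ip (γ u - γ t₀) d / ip d d) • d)
            ((ip (Z0 (γ s)) d / ip d d) • d) s := (h2.div_const _).smul_const d
        have h4 := (hderiv s hs).sub h3
        have he : Z0 (γ s) - (ip (Z0 (γ s)) d / ip d d) • d = 0 := by
          rw [sub_eq_zero]
          exact hpar s hs
        rw [he] at h4
        exact h4
      have hminI : min t₀ t ∈ I := by
        rcases le_total t₀ t with hc | hc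
        · rwa [min_eq_left hc]
        · rwa [min_eq_right hc]
      have hmaxI : max t₀ t ∈ I := by
        rcases le_total t₀ t with hc | hc
        · rwa [max_eq_right hc]
        · rwa [max_eq_left hc]
      have hIccI : Icc (min t₀ t) (max t₀ t) ⊆ I := hOrd.out hminI hmaxI
      have hconst := const_on_Icc (fun s hs => hf' s (hIccI hs))
      have hft : f t = f t₀ := by
        rw [hconst t ⟨min_le_right _ _, le_max_right _ _⟩,
          hconst t₀ ⟨min_le_left _ _, le_max_left _ _⟩]
      have hft₀ : f t₀ = γ t₀ := by
        rw [hf_def]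
        simp only [sub_self]
        have hz : ip (0 : Fin 3 → ℝ) d = 0 := by simp [ip]
        rw [hz]
        simp
      rw [hft₀, hf_def] at hft
      simp only at hft
      rw [sub_eq_iff_eq_add] at hft
      exact hft
  · -- reverse: straight lines ⇒ nab parallel
    intro h p hp
    have hct : ContDiffAt ℝ 1 Z0 p :=
      (hZ0.contDiffAt (hU.mem_nhds hp)).of_le (by exact_mod_cast le_top)
    obtain ⟨γ, hγ0, ε, hε, hγ⟩ := hct.exists_forall_mem_closedBall_exists_eq_forall_mem_Ioo_hasDerivAt₀ (0 : ℝ)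
    have h0mem : (0 : ℝ) ∈ Ioo (0 - ε) (0 + ε) := by
      constructor
      · linarith
      · linarith
    have hcont : ContinuousAt γ 0 := (hγ 0 h0mem).continuousAt
    have hUnhds : U ∈ nhds (γ 0) := hU.mem_nhds (by rw [hγ0]; exact hp)
    obtain ⟨δ', hδ'pos, hδ'⟩ := Metric.mem_nhds_iff.mp (hcont.preimage_mem_nhds hUnhds)
    set δ := min δ' ε with hδ_def
    have hδpos : 0 < δ := lt_min hδ'pos hε
    have hδ1 : δ ≤ δ' := min_le_left _ _
    have hδ2 : δ ≤ ε := min_le_right _ _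
    set I := Ioo (-δ) δ with hI_def
    have hIU : ∀ t ∈ I, γ t ∈ U := by
      intro t ht
      apply hδ'
      rw [Real.ball_eq_Ioo]
      exact ⟨by linarith [ht.1], by linarith [ht.2]⟩
    have hIderiv : ∀ t ∈ I, HasDerivAt γ (Z0 (γ t)) t := by
      intro t ht
      exact hγ t ⟨by linarith [ht.1], by linarith [ht.2]⟩
    obtain ⟨q, dd, hdd0, hline⟩ := h I γ isOpen_Ioo (convex_Ioo _ _).isPreconnected hIU hIderiv
    have hddne := (ip_pos hdd0).ne'
    have h0I : (0 : ℝ) ∈ I := ⟨by linarith, hδpos⟩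
    have hγeq : ∀ t ∈ I, γ t = q + (ip (γ t - q) dd / ip dd dd) • dd := by
      intro t ht
      obtain ⟨s, hs⟩ := hline t ht
      rw [hs, add_sub_cancel_left, ip_smul_left, mul_div_assoc, div_self hddne, mul_one]
    have hb : ∀ t ∈ I, Z0 (γ t) = (ip (Z0 (γ t)) dd / ip dd dd) • dd := by
      intro t ht
      have hc' : HasDerivAt (fun u => ip (γ u - q) dd / ip dd dd)
          (ip (Z0 (γ t)) dd / ip dd dd) t :=
        (hasDerivAt_ip_left ((hIderiv t ht).sub_const q) dd).div_const _
      have hg : HasDerivAt (fun u => q + (ip (γ u - q) dd / ip dd dd) • dd)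
          ((ip (Z0 (γ t)) dd / ip dd dd) • dd) t := (hc'.smul_const dd).const_add q
      have heq : γ =ᶠ[nhds t] fun u => q + (ip (γ u - q) dd / ip dd dd) • dd :=
        Filter.eventuallyEq_of_mem (isOpen_Ioo.mem_nhds ht) (fun u hu => hγeq u hu)
      exact (hIderiv t ht).unique (hg.congr_of_eventuallyEq heq)
    have hnab : HasDerivAt (fun u => Z0 (γ u)) (nab Z0 (γ 0)) 0 :=
      hasDerivAt_Z0_comp hU hZ0 (hIU 0 h0I) (hIderiv 0 h0I)
    have hb' : HasDerivAt (fun u => (ip (Z0 (γ u)) dd / ip dd dd) • dd)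
        ((ip (nab Z0 (γ 0)) dd / ip dd dd) • dd) 0 :=
      ((hasDerivAt_ip_left hnab dd).div_const _).smul_const dd
    have heq2 : (fun u => Z0 (γ u)) =ᶠ[nhds 0] fun u => (ip (Z0 (γ u)) dd / ip dd dd) • dd :=
      Filter.eventuallyEq_of_mem (isOpen_Ioo.mem_nhds h0I) (fun u hu => hb u hu)
    have h2 : nab Z0 (γ 0) = (ip (nab Z0 (γ 0)) dd / ip dd dd) • dd :=
      hnab.unique (hb'.congr_of_eventuallyEq heq2)
    have hZ0p : Z0 p = (ip (Z0 p) dd / ip dd dd) • dd := by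
      have := hb 0 h0I
      rwa [hγ0] at this
    have hnabp : nab Z0 p = (ip (nab Z0 p) dd / ip dd dd) • dd := by
      rwa [hγ0] at h2
    set b0 := ip (Z0 p) dd / ip dd dd with hb0_def
    have hb0 : b0 ≠ 0 := by
      intro hzero
      apply hnz p hp
      rw [hZ0p, hzero, zero_smul]
    refine ⟨(ip (nab Z0 p) dd / ip dd dd) / b0, ?_⟩
    conv_lhs => rw [hnabp]
    conv_rhs => rw [hZ0p]
    rw [smul_smul, div_mul_cancel₀ _ hb0]
end
end

section
/- Let g be a constant real symmetric invertible 3×3 matrix, φ, ψ : U → ℝ smooth on an open set U ⊆ ℝ³ with ∇φ × ∇ψ ≠ 0 on U; set Z0 := ∇φ × ∇ψ, Z1 := g⁻¹∇φ, Z2 := g⁻¹∇ψ. Suppose h, V : U → ℝ are smooth and, with Z := h·Z0, for every index i one has Σ_j g_{ij} (Σ_k Z^k ∂Z^j/∂x^k) = −∂V/∂x^i on U. Then on U: Z0(½ h² g(Z0,Z0) + V) = 0, Z1(V) = −h²·∇_{Z0}Z0(φ), and Z2(V) = −h²·∇_{Z0}Z0(ψ). -/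
noncomputable section

set_option linter.unusedVariables false

theorem diffat_pd {f : (Fin 3 → ℝ) → ℝ} {p : Fin 3 → ℝ} (hf : ContDiffAt ℝ (⊤:ℕ∞) f p) (i : Fin 3) :
    DifferentiableAt ℝ (fun q => pd i f q) p := by
  unfold pd
  exact ((hf.fderiv_right (m := (⊤:ℕ∞)) (by norm_cast)).clm_apply
    contDiffAt_const).differentiableAt (by norm_cast)

theorem pd_add {f g : (Fin 3 → ℝ) → ℝ} {p : Fin 3 → ℝ} (i : Fin 3)
    (hf : DifferentiableAt ℝ f p) (hg : DifferentiableAt ℝ g p) :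
    pd i (fun q => f q + g q) p = pd i f p + pd i g p := by
  unfold pd; rw [fderiv_fun_add hf hg]; rfl

theorem pd_mul {f g : (Fin 3 → ℝ) → ℝ} {p : Fin 3 → ℝ} (i : Fin 3)
    (hf : DifferentiableAt ℝ f p) (hg : DifferentiableAt ℝ g p) :
    pd i (fun q => f q * g q) p = pd i f p * g p + f p * pd i g p := by
  unfold pd; rw [fderiv_fun_mul hf hg]; simp; ring

theorem pd_const_mul {f : (Fin 3 → ℝ) → ℝ} {p : Fin 3 → ℝ} (c : ℝ) (i : Fin 3)
    (hf : DifferentiableAt ℝ f p) :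
    pd i (fun q => c * f q) p = c * pd i f p := by
  unfold pd; rw [fderiv_const_mul hf]; rfl

theorem pd_sum {ι : Type*} {p : Fin 3 → ℝ} (i : Fin 3) (s : Finset ι)
    {f : ι → (Fin 3 → ℝ) → ℝ} (hf : ∀ j ∈ s, DifferentiableAt ℝ (f j) p) :
    pd i (fun q => ∑ j ∈ s, f j q) p = ∑ j ∈ s, pd i (f j) p := by
  unfold pd; rw [fderiv_fun_sum hf]; simp

/-- derivation of the fundamental equations (2.9)–(2.11) of the generalized
Szebehely problem from the force condition `g_{ij} Z(Zʲ) = −∂V/∂xⁱ` with `Z = h·Z0`. -/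
theorem fundamental_equations
    (g : Matrix (Fin 3) (Fin 3) ℝ) (hsym : g.IsSymm) (hinv : IsUnit g.det)
    (U : Set (Fin 3 → ℝ)) (hU : IsOpen U)
    (φ ψ h V : (Fin 3 → ℝ) → ℝ)
    (hφ : ContDiffOn ℝ (⊤ : ℕ∞) φ U) (hψ : ContDiffOn ℝ (⊤ : ℕ∞) ψ U)
    (hh : ContDiffOn ℝ (⊤ : ℕ∞) h U) (hV : ContDiffOn ℝ (⊤ : ℕ∞) V U)
    (hind : ∀ p ∈ U, cross (grad φ p) (grad ψ p) ≠ 0)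
    (Z0 Z1 Z2 Z : (Fin 3 → ℝ) → (Fin 3 → ℝ))
    (hZ0 : Z0 = fun p => cross (grad φ p) (grad ψ p))
    (hZ1 : Z1 = fun p => g⁻¹.mulVec (grad φ p))
    (hZ2 : Z2 = fun p => g⁻¹.mulVec (grad ψ p))
    (hZ : Z = fun p => h p • Z0 p)
    (hforce : ∀ p ∈ U, ∀ i,
      (∑ j, g i j * (∑ k, Z p k * pd k (fun q => Z q j) p)) = - pd i V p)
    (p : Fin 3 → ℝ) (hp : p ∈ U) :
    dd (Z0 p) (fun q => 1/2 * h q ^ 2 * gB g (Z0 q) (Z0 q) + V q) p = 0 ∧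
    dd (Z1 p) V p = - h p ^ 2 * dd (nab Z0 p) φ p ∧
    dd (Z2 p) V p = - h p ^ 2 * dd (nab Z0 p) ψ p := by
  -- pointwise regularity
  have cφ : ContDiffAt ℝ (⊤:ℕ∞) φ p := hφ.contDiffAt (hU.mem_nhds hp)
  have cψ : ContDiffAt ℝ (⊤:ℕ∞) ψ p := hψ.contDiffAt (hU.mem_nhds hp)
  have ch : ContDiffAt ℝ (⊤:ℕ∞) h p := hh.contDiffAt (hU.mem_nhds hp)
  have cV : ContDiffAt ℝ (⊤:ℕ∞) V p := hV.contDiffAt (hU.mem_nhds hp)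
  have dh : DifferentiableAt ℝ h p := ch.differentiableAt (by norm_cast)
  have dV : DifferentiableAt ℝ V p := cV.differentiableAt (by norm_cast)
  have dφp : ∀ i, DifferentiableAt ℝ (fun q => pd i φ q) p := fun i => diffat_pd cφ i
  have dψp : ∀ i, DifferentiableAt ℝ (fun q => pd i ψ q) p := fun i => diffat_pd cψ i
  have hZ0fun : ∀ j, (fun q => Z0 q j) = fun q => cross (grad φ q) (grad ψ q) j := by
    intro j; funext q; rw [hZ0]
  have dZ0 : ∀ j, DifferentiableAt ℝ (fun q => Z0 q j) p := by
    intro j; rw [hZ0fun j]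
    fin_cases j <;> simp only [cross, grad, Matrix.cons_val_zero, Matrix.cons_val_one,
      Matrix.head_cons, Matrix.cons_val_two, Matrix.tail_cons, Fin.isValue] <;>
      exact ((dφp _).mul (dψp _)).sub ((dφp _).mul (dψp _))
  have hZfun : ∀ j, (fun q => Z q j) = fun q => h q * Z0 q j := by
    intro j; funext q; rw [hZ]; simp
  have hZpt : ∀ k, Z p k = h p * Z0 p k := by intro k; rw [hZ]; simp
  have hpdZ : ∀ k j, pd k (fun q => Z q j) p
      = pd k h p * Z0 p j + h p * pd k (fun q => Z0 q j) p := by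
    intro k j; rw [hZfun j]; exact pd_mul k dh (dZ0 j)
  -- force condition in expanded form
  have F : ∀ i, (∑ j, g i j * (h p * (∑ k, Z0 p k * pd k h p) * Z0 p j
      + h p ^ 2 * nab Z0 p j)) = - pd i V p := by
    intro i
    rw [← hforce p hp i]
    refine Finset.sum_congr rfl fun j _ => ?_
    congr 1
    simp only [hpdZ, hZpt, nab]
    rw [Fin.sum_univ_three, Fin.sum_univ_three, Fin.sum_univ_three]
    ring
  -- symmetry entries
  have hs10 : g 1 0 = g 0 1 := hsym.apply 0 1
  have hs20 : g 2 0 = g 0 2 := hsym.apply 0 2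
  have hs21 : g 2 1 = g 1 2 := hsym.apply 1 2
  -- orthogonality of Z0 with grad φ and grad ψ
  have horthφ : (∑ j, Z0 p j * pd j φ p) = 0 := by
    rw [hZ0]
    simp only [cross, grad, Fin.sum_univ_three, Matrix.cons_val_zero, Matrix.cons_val_one,
      Matrix.head_cons, Matrix.cons_val_two, Matrix.tail_cons]
    ring
  have horthψ : (∑ j, Z0 p j * pd j ψ p) = 0 := by
    rw [hZ0]
    simp only [cross, grad, Fin.sum_univ_three, Matrix.cons_val_zero, Matrix.cons_val_one,
      Matrix.head_cons, Matrix.cons_val_two, Matrix.tail_cons]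
    ring
  -- key matrix identity
  have hgsum : ∀ w : Fin 3 → ℝ, ∀ j, (∑ i, g⁻¹.mulVec w i * g i j) = w j := by
    intro w j
    have h1 : (∑ i, g⁻¹.mulVec w i * g i j) = g.mulVec (g⁻¹.mulVec w) j := by
      simp only [Matrix.mulVec, dotProduct]
      exact Finset.sum_congr rfl fun i _ => by rw [hsym.apply i j, mul_comm]
    rw [h1, Matrix.mulVec_mulVec, Matrix.mul_nonsing_inv _ hinv, Matrix.one_mulVec]
  have hVpd : ∀ i, pd i V p = -(∑ j, g i j * (h p * (∑ k, Z0 p k * pd k h p) * Z0 p j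
      + h p ^ 2 * nab Z0 p j)) := fun i => by linarith [F i]
  refine ⟨?_, ?_, ?_⟩
  · -- (2.9) : energy integral
    have dG : DifferentiableAt ℝ (fun q => gB g (Z0 q) (Z0 q)) p := by
      have e0 : (fun q => gB g (Z0 q) (Z0 q)) = fun q => ∑ i, ∑ j, g i j * Z0 q i * Z0 q j := rfl
      rw [e0]
      exact DifferentiableAt.fun_sum fun i _ => DifferentiableAt.fun_sum fun j _ =>
        (((differentiableAt_const _).mul (dZ0 i)).mul (dZ0 j))
    have hpdG : ∀ i, pd i (fun q => gB g (Z0 q) (Z0 q)) p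
        = ∑ j, ∑ l, g j l * (pd i (fun q => Z0 q j) p * Z0 p l
            + Z0 p j * pd i (fun q => Z0 q l) p) := by
      intro i
      have e1 : (fun q => gB g (Z0 q) (Z0 q))
          = fun q => ∑ j, ∑ l, g j l * (Z0 q j * Z0 q l) := by
        funext q; unfold gB
        exact Finset.sum_congr rfl fun j _ => Finset.sum_congr rfl fun l _ => by ring
      rw [e1, pd_sum i Finset.univ (f := fun j q => ∑ l, g j l * (Z0 q j * Z0 q l)) (fun j _ => DifferentiableAt.fun_sum fun l _ =>
        (differentiableAt_const _).fun_mul ((dZ0 j).fun_mul (dZ0 l)))]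
      refine Finset.sum_congr rfl fun j _ => ?_
      rw [pd_sum i Finset.univ (f := fun l q => g j l * (Z0 q j * Z0 q l)) (fun l _ =>
        (differentiableAt_const _).fun_mul ((dZ0 j).fun_mul (dZ0 l)))]
      refine Finset.sum_congr rfl fun l _ => ?_
      rw [pd_const_mul _ i ((dZ0 j).fun_mul (dZ0 l)), pd_mul i (dZ0 j) (dZ0 l)]
    have d1 : DifferentiableAt ℝ (fun q => h q * h q) p := dh.mul dh
    have d2 : DifferentiableAt ℝ (fun q => (h q * h q) * gB g (Z0 q) (Z0 q)) p := d1.mul dG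
    have d3 : DifferentiableAt ℝ (fun q => 1/2 * ((h q * h q) * gB g (Z0 q) (Z0 q))) p :=
      d2.const_mul _
    have hpdE : ∀ i, pd i (fun q => 1/2 * h q ^ 2 * gB g (Z0 q) (Z0 q) + V q) p
        = 1/2 * ((pd i h p * h p + h p * pd i h p) * gB g (Z0 p) (Z0 p)
            + (h p * h p) * pd i (fun q => gB g (Z0 q) (Z0 q)) p) + pd i V p := by
      intro i
      have e2 : (fun q => 1/2 * h q ^ 2 * gB g (Z0 q) (Z0 q) + V q)
          = fun q => 1/2 * ((h q * h q) * gB g (Z0 q) (Z0 q)) + V q := by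
        funext q; ring
      rw [e2, pd_add i d3 dV, pd_const_mul _ i d2, pd_mul i d1 dG, pd_mul i dh dh]
    have F0 := F 0; have F1 := F 1; have F2 := F 2
    simp only [nab, Fin.sum_univ_three] at F0 F1 F2
    simp only [hs10, hs20, hs21] at F0 F1 F2
    unfold dd
    simp only [hpdE]
    simp only [hpdG]
    simp only [gB, Fin.sum_univ_three]
    simp only [hs10, hs20, hs21]
    linear_combination Z0 p 0 * F0 + Z0 p 1 * F1 + Z0 p 2 * F2
  · -- (2.10)
    unfold dd
    have hg0 := hgsum (grad φ p) 0
    have hg1 := hgsum (grad φ p) 1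
    have hg2 := hgsum (grad φ p) 2
    rw [hZ1]
    simp only [hVpd, grad, Fin.sum_univ_three]
    simp only [grad, Fin.sum_univ_three] at hg0 hg1 hg2 horthφ
    simp only [hs10, hs20, hs21] at hg0 hg1 hg2 ⊢
    linear_combination
      (-(h p * (Z0 p 0 * pd 0 h p + Z0 p 1 * pd 1 h p + Z0 p 2 * pd 2 h p) * Z0 p 0
          + h p ^ 2 * nab Z0 p 0)) * hg0 +
      (-(h p * (Z0 p 0 * pd 0 h p + Z0 p 1 * pd 1 h p + Z0 p 2 * pd 2 h p) * Z0 p 1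
          + h p ^ 2 * nab Z0 p 1)) * hg1 +
      (-(h p * (Z0 p 0 * pd 0 h p + Z0 p 1 * pd 1 h p + Z0 p 2 * pd 2 h p) * Z0 p 2
          + h p ^ 2 * nab Z0 p 2)) * hg2 +
      (-(h p * (Z0 p 0 * pd 0 h p + Z0 p 1 * pd 1 h p + Z0 p 2 * pd 2 h p))) * horthφ
  · -- (2.11)
    unfold dd
    have hg0 := hgsum (grad ψ p) 0
    have hg1 := hgsum (grad ψ p) 1
    have hg2 := hgsum (grad ψ p) 2
    rw [hZ2]
    simp only [hVpd, grad, Fin.sum_univ_three]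
    simp only [grad, Fin.sum_univ_three] at hg0 hg1 hg2 horthψ
    simp only [hs10, hs20, hs21] at hg0 hg1 hg2 ⊢
    linear_combination
      (-(h p * (Z0 p 0 * pd 0 h p + Z0 p 1 * pd 1 h p + Z0 p 2 * pd 2 h p) * Z0 p 0
          + h p ^ 2 * nab Z0 p 0)) * hg0 +
      (-(h p * (Z0 p 0 * pd 0 h p + Z0 p 1 * pd 1 h p + Z0 p 2 * pd 2 h p) * Z0 p 1
          + h p ^ 2 * nab Z0 p 1)) * hg1 +
      (-(h p * (Z0 p 0 * pd 0 h p + Z0 p 1 * pd 1 h p + Z0 p 2 * pd 2 h p) * Z0 p 2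
          + h p ^ 2 * nab Z0 p 2)) * hg2 +
      (-(h p * (Z0 p 0 * pd 0 h p + Z0 p 1 * pd 1 h p + Z0 p 2 * pd 2 h p))) * horthψ
end
end

section
/- Let g be a constant real symmetric invertible 3×3 matrix, φ, ψ : U → ℝ smooth on an open set U ⊆ ℝ³ with ∇φ × ∇ψ ≠ 0 on U; set Z0 := ∇φ × ∇ψ, Z1 := g⁻¹∇φ, Z2 := g⁻¹∇ψ. Let ρ : U → ℝ be smooth and nowhere zero and set Z̃0 := ρ·Z0. Then on U: ∇_{Z̃0}Z̃0(φ) = ρ²·∇_{Z0}Z0(φ) and ∇_{Z̃0}Z̃0(ψ) = ρ²·∇_{Z0}Z0(ψ). Consequently, if ∇_{Z0}Z0(φ) is nowhere zero on U, then Ã := ½ g(Z̃0,Z̃0)/∇_{Z̃0}Z̃0(φ) equals A := ½ g(Z0,Z0)/∇_{Z0}Z0(φ), and X̃ := (∇_{Z̃0}Z̃0(ψ))·Z1 − (∇_{Z̃0}Z̃0(φ))·Z2 equals ρ²·X, where X := (∇_{Z0}Z0(ψ))·Z1 − (∇_{Z0}Z0(φ))·Z2. -/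
noncomputable section

set_option linter.unusedVariables false

/-- rescaling invariance (Section 4): with `Z̃0 = ρ·Z0`,
`∇_{Z̃0}Z̃0(φ) = ρ²·∇_{Z0}Z0(φ)`, `∇_{Z̃0}Z̃0(ψ) = ρ²·∇_{Z0}Z0(ψ)`, and consequently
`Ã = A` and `X̃ = ρ²·X`. -/
theorem rescaling_invariance
    (g : Matrix (Fin 3) (Fin 3) ℝ) (hsym : g.IsSymm) (hinv : IsUnit g.det)
    (U : Set (Fin 3 → ℝ)) (hU : IsOpen U)
    (φ ψ : (Fin 3 → ℝ) → ℝ)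
    (hφ : ContDiffOn ℝ (⊤ : ℕ∞) φ U) (hψ : ContDiffOn ℝ (⊤ : ℕ∞) ψ U)
    (hind : ∀ p ∈ U, cross (grad φ p) (grad ψ p) ≠ 0)
    (Z0 Z1 Z2 : (Fin 3 → ℝ) → (Fin 3 → ℝ))
    (hZ0 : Z0 = fun p => cross (grad φ p) (grad ψ p))
    (hZ1 : Z1 = fun p => g⁻¹.mulVec (grad φ p))
    (hZ2 : Z2 = fun p => g⁻¹.mulVec (grad ψ p))
    (ρ : (Fin 3 → ℝ) → ℝ) (hρ : ContDiffOn ℝ (⊤ : ℕ∞) ρ U)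
    (hρnz : ∀ p ∈ U, ρ p ≠ 0)
    (Zt : (Fin 3 → ℝ) → (Fin 3 → ℝ)) (hZt : Zt = fun p => ρ p • Z0 p)
    (p : Fin 3 → ℝ) (hp : p ∈ U) :
    dd (nab Zt p) φ p = ρ p ^ 2 * dd (nab Z0 p) φ p ∧
    dd (nab Zt p) ψ p = ρ p ^ 2 * dd (nab Z0 p) ψ p ∧
    ((∀ q ∈ U, dd (nab Z0 q) φ q ≠ 0) →
      1/2 * gB g (Zt p) (Zt p) / dd (nab Zt p) φ p
          = 1/2 * gB g (Z0 p) (Z0 p) / dd (nab Z0 p) φ p ∧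
      dd (nab Zt p) ψ p • Z1 p - dd (nab Zt p) φ p • Z2 p
          = ρ p ^ 2 • (dd (nab Z0 p) ψ p • Z1 p - dd (nab Z0 p) φ p • Z2 p)) := by

  have hmem := hU.mem_nhds hp
  have hφa : ContDiffAt ℝ (⊤ : ℕ∞) φ p := hφ.contDiffAt hmem
  have hψa : ContDiffAt ℝ (⊤ : ℕ∞) ψ p := hψ.contDiffAt hmem
  have hρa : ContDiffAt ℝ (⊤ : ℕ∞) ρ p := hρ.contDiffAt hmem
  have hgrad : ∀ (f : (Fin 3 → ℝ) → ℝ), ContDiffAt ℝ (⊤ : ℕ∞) f p →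
      ∀ k : Fin 3, ContDiffAt ℝ (⊤ : ℕ∞) (fun q => pd k f q) p := by
    intro f hf k
    have h1 : ContDiffAt ℝ (⊤ : ℕ∞) (fderiv ℝ f) p := hf.fderiv_right (by exact_mod_cast le_top)
    exact ((ContinuousLinearMap.apply ℝ ℝ (Pi.single k 1) :
      ((Fin 3 → ℝ) →L[ℝ] ℝ) →L[ℝ] ℝ).contDiff.contDiffAt).comp p h1
  have hgφ := hgrad φ hφa
  have hgψ := hgrad ψ hψa
  have hZ0c : ∀ i : Fin 3, ContDiffAt ℝ (⊤ : ℕ∞) (fun q => Z0 q i) p := by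
    intro i
    rw [hZ0]
    fin_cases i <;>
      simp only [cross, grad, Matrix.cons_val_zero, Matrix.cons_val_one, Matrix.head_cons,
        Matrix.cons_val_two, Matrix.tail_cons, Fin.isValue]
    · exact ((hgφ 1).mul (hgψ 2)).sub ((hgφ 2).mul (hgψ 1))
    · exact ((hgφ 2).mul (hgψ 0)).sub ((hgφ 0).mul (hgψ 2))
    · exact ((hgφ 0).mul (hgψ 1)).sub ((hgφ 1).mul (hgψ 0))
  have hd0 : ∀ i : Fin 3, DifferentiableAt ℝ (fun q => Z0 q i) p :=
    fun i => (hZ0c i).differentiableAt (by simp)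
  have hdρ : DifferentiableAt ℝ ρ p := hρa.differentiableAt (by simp)
  have hpdm : ∀ j i : Fin 3, pd j (fun q => Zt q i) p
      = ρ p * pd j (fun q => Z0 q i) p + Z0 p i * pd j ρ p := by
    intro j i
    have he : (fun q => Zt q i) = fun q => ρ q * Z0 q i := by
      funext q; rw [hZt]; simp
    rw [he]
    unfold pd
    rw [fderiv_fun_mul hdρ (hd0 i)]
    simp [mul_comm]
  have hz : ∀ j, Zt p j = ρ p * Z0 p j := by intro j; rw [hZt]; simp
  set S := Z0 p 0 * pd 0 ρ p + Z0 p 1 * pd 1 ρ p + Z0 p 2 * pd 2 ρ p with hS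
  have key : ∀ i, nab Zt p i = ρ p * S * Z0 p i + ρ p ^ 2 * nab Z0 p i := by
    intro i
    simp only [nab, Fin.sum_univ_three, hpdm, hz, hS]
    ring
  have horth : ∀ (f : (Fin 3 → ℝ) → ℝ),
      Z0 p 0 * pd 0 f p + Z0 p 1 * pd 1 f p + Z0 p 2 * pd 2 f p
        = (grad φ p 1 * grad ψ p 2 - grad φ p 2 * grad ψ p 1) * pd 0 f p
        + (grad φ p 2 * grad ψ p 0 - grad φ p 0 * grad ψ p 2) * pd 1 f p
        + (grad φ p 0 * grad ψ p 1 - grad φ p 1 * grad ψ p 0) * pd 2 f p := by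
    intro f
    rw [hZ0]
    simp [cross]
  have hgr : ∀ k, grad φ p k = pd k φ p := fun k => rfl
  have hgr' : ∀ k, grad ψ p k = pd k ψ p := fun k => rfl
  have horthφ : Z0 p 0 * pd 0 φ p + Z0 p 1 * pd 1 φ p + Z0 p 2 * pd 2 φ p = 0 := by
    rw [horth φ]; simp only [hgr, hgr']; ring
  have horthψ : Z0 p 0 * pd 0 ψ p + Z0 p 1 * pd 1 ψ p + Z0 p 2 * pd 2 ψ p = 0 := by
    rw [horth ψ]; simp only [hgr, hgr']; ring
  have h1 : dd (nab Zt p) φ p = ρ p ^ 2 * dd (nab Z0 p) φ p := by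
    simp only [dd, Fin.sum_univ_three, key]
    linear_combination (ρ p * S) * horthφ
  have h2 : dd (nab Zt p) ψ p = ρ p ^ 2 * dd (nab Z0 p) ψ p := by
    simp only [dd, Fin.sum_univ_three, key]
    linear_combination (ρ p * S) * horthψ
  refine ⟨h1, h2, fun hA => ⟨?_, ?_⟩⟩
  · have hG : gB g (Zt p) (Zt p) = ρ p ^ 2 * gB g (Z0 p) (Z0 p) := by
      simp only [gB, Fin.sum_univ_three, hz]; ring
    have hρ2 : ρ p ^ 2 ≠ 0 := pow_ne_zero _ (hρnz p hp)
    have hD := hA p hp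
    rw [hG, h1]
    field_simp
    rw [div_eq_iff (hρnz p hp)]; ring
  · funext i
    simp only [Pi.sub_apply, Pi.smul_apply, smul_eq_mul, h1, h2]
    ring
end
end

section
/- Let g be a constant real symmetric invertible 3×3 matrix and Z0 a smooth vector field on an open set U ⊆ ℝ³ with g(Z0,Z0) nowhere zero on U; set a := g·Z0. Let X, Y be smooth vector fields on U with g(Z0, X) = 0 and g(Z0, Y) = 0 on U, and with X(p), Y(p) linearly independent for every p ∈ U. Then for each p ∈ U: ⟨curl a, a⟩(p) = 0 if and only if g([X,Y], Z0)(p) = 0. -/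
noncomputable section

set_option linter.unusedVariables false
set_option maxHeartbeats 1600000

lemma pd_zero_of_eventually {f : (Fin 3 → ℝ) → ℝ} {U : Set (Fin 3 → ℝ)} (hU : IsOpen U)
    {p : Fin 3 → ℝ} (hp : p ∈ U) (h : ∀ q ∈ U, f q = 0) (j : Fin 3) : pd j f p = 0 := by
  have he : f =ᶠ[nhds p] (fun _ => (0:ℝ)) := by
    filter_upwards [hU.mem_nhds hp] with q hq using h q hq
  unfold pd
  rw [Filter.EventuallyEq.fderiv_eq he, fderiv_fun_const]
  simp

lemma pd_sum_mul {f h : (Fin 3 → ℝ) → (Fin 3 → ℝ)} {p : Fin 3 → ℝ}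
    (hf : ∀ i, DifferentiableAt ℝ (fun q => f q i) p)
    (hh : ∀ i, DifferentiableAt ℝ (fun q => h q i) p) (j : Fin 3) :
    pd j (fun q => ∑ i, f q i * h q i) p
      = ∑ i, (pd j (fun q => f q i) p * h p i + f p i * pd j (fun q => h q i) p) := by
  unfold pd
  rw [fderiv_fun_sum (fun i _ => (hf i).fun_mul (hh i))]
  rw [ContinuousLinearMap.sum_apply]
  refine Finset.sum_congr rfl fun i _ => ?_
  rw [fderiv_fun_mul (hf i) (hh i)]
  simp [smul_eq_mul]
  ring

/-- dual Frobenius, (4.6): for smooth `X`, `Y` spanning the `g`-orthogonal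
complement of `Z0`, at each `p ∈ U`: `⟨curl a, a⟩(p) = 0 ↔ g([X,Y],Z0)(p) = 0`,
where `a = g·Z0`. -/
theorem dual_frobenius
    (g : Matrix (Fin 3) (Fin 3) ℝ) (hsym : g.IsSymm) (hinv : IsUnit g.det)
    (U : Set (Fin 3 → ℝ)) (hU : IsOpen U)
    (Z0 : (Fin 3 → ℝ) → (Fin 3 → ℝ)) (hZ0 : ContDiffOn ℝ (⊤ : ℕ∞) Z0 U)
    (hGnz : ∀ p ∈ U, gB g (Z0 p) (Z0 p) ≠ 0)
    (a : (Fin 3 → ℝ) → (Fin 3 → ℝ)) (ha : a = fun p => g.mulVec (Z0 p))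
    (X Y : (Fin 3 → ℝ) → (Fin 3 → ℝ))
    (hX : ContDiffOn ℝ (⊤ : ℕ∞) X U) (hY : ContDiffOn ℝ (⊤ : ℕ∞) Y U)
    (hXo : ∀ p ∈ U, gB g (Z0 p) (X p) = 0)
    (hYo : ∀ p ∈ U, gB g (Z0 p) (Y p) = 0)
    (hindep : ∀ p ∈ U, LinearIndependent ℝ ![X p, Y p])
    (p : Fin 3 → ℝ) (hp : p ∈ U) :
    ip (curl a p) (a p) = 0 ↔ gB g (lieB X Y p) (Z0 p) = 0 := by
  have hs : ∀ i j, g i j = g j i := by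
    intro i j
    have := congrFun (congrFun hsym j) i
    simpa using this
  have hmem := hU.mem_nhds hp
  have hZd : ∀ i, DifferentiableAt ℝ (fun q => Z0 q i) p :=
    fun i => (differentiableAt_pi.mp ((hZ0.contDiffAt hmem).differentiableAt (by simp))) i
  have hXd : ∀ i, DifferentiableAt ℝ (fun q => X q i) p :=
    fun i => (differentiableAt_pi.mp ((hX.contDiffAt hmem).differentiableAt (by simp))) i
  have hYd : ∀ i, DifferentiableAt ℝ (fun q => Y q i) p :=
    fun i => (differentiableAt_pi.mp ((hY.contDiffAt hmem).differentiableAt (by simp))) i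
  have haq : ∀ q i, a q i = ∑ j, g i j * Z0 q j := by
    intro q i; rw [ha]; simp [Matrix.mulVec, dotProduct]
  have had : ∀ i, DifferentiableAt ℝ (fun q => a q i) p := by
    intro i
    have he : (fun q => a q i) = fun q => ∑ j, g i j * Z0 q j := funext fun q => haq q i
    rw [he]
    exact DifferentiableAt.fun_sum (fun j _ => (hZd j).const_mul _)
  -- pointwise Euclidean orthogonality of a with X and Y on U
  have hipX : ∀ q ∈ U, ∑ i, a q i * X q i = 0 := by
    intro q hq
    have h0 := hXo q hq
    simp only [gB, Fin.sum_univ_three] at h0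
    simp only [haq, Fin.sum_univ_three]
    linear_combination h0 + (Z0 q 1 * X q 0 - Z0 q 0 * X q 1) * hs 0 1
      + (Z0 q 2 * X q 0 - Z0 q 0 * X q 2) * hs 0 2
      + (Z0 q 2 * X q 1 - Z0 q 1 * X q 2) * hs 1 2
  have hipY : ∀ q ∈ U, ∑ i, a q i * Y q i = 0 := by
    intro q hq
    have h0 := hYo q hq
    simp only [gB, Fin.sum_univ_three] at h0
    simp only [haq, Fin.sum_univ_three]
    linear_combination h0 + (Z0 q 1 * Y q 0 - Z0 q 0 * Y q 1) * hs 0 1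
      + (Z0 q 2 * Y q 0 - Z0 q 0 * Y q 2) * hs 0 2
      + (Z0 q 2 * Y q 1 - Z0 q 1 * Y q 2) * hs 1 2
  -- differentiating the orthogonality relations
  have EX : ∀ j, ∑ i, (pd j (fun q => a q i) p * X p i + a p i * pd j (fun q => X q i) p) = 0 := by
    intro j
    rw [← pd_sum_mul had hXd j]
    exact pd_zero_of_eventually hU hp hipX j
  have EY : ∀ j, ∑ i, (pd j (fun q => a q i) p * Y p i + a p i * pd j (fun q => Y q i) p) = 0 := by
    intro j
    rw [← pd_sum_mul had hYd j]
    exact pd_zero_of_eventually hU hp hipY j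
  have hEX0 := EX 0; have hEX1 := EX 1; have hEX2 := EX 2
  have hEY0 := EY 0; have hEY1 := EY 1; have hEY2 := EY 2
  simp only [Fin.sum_univ_three] at hEX0 hEX1 hEX2 hEY0 hEY1 hEY2
  -- key algebraic reduction: g([X,Y],Z0) = -⟨curl a, X×Y⟩
  have key : gB g (lieB X Y p) (Z0 p) = ∑ i, a p i * lieB X Y p i := by
    simp only [gB, haq, Fin.sum_univ_three]; ring
  have hB : gB g (lieB X Y p) (Z0 p) = - ip (curl a p) (cross (X p) (Y p)) := by
    rw [key]
    simp only [lieB, curl, cross, ip, Fin.sum_univ_three, Matrix.cons_val_zero,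
      Matrix.cons_val_one, Matrix.head_cons, Matrix.cons_val_two, Matrix.tail_cons]
    linear_combination X p 0 * hEY0 + X p 1 * hEY1 + X p 2 * hEY2
      - Y p 0 * hEX0 - Y p 1 * hEX1 - Y p 2 * hEX2
  -- cross product is nonzero and a p is proportional to it
  have hcne : cross (X p) (Y p) ≠ 0 := by
    have : cross (X p) (Y p) = crossProduct (X p) (Y p) := by
      simp [cross, cross_apply]
    rw [this]
    exact crossProduct_ne_zero_iff_linearIndependent.mpr (hindep p hp)
  have hccne : ip (cross (X p) (Y p)) (cross (X p) (Y p)) ≠ 0 := by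
    intro h
    apply hcne
    simp only [ip, Fin.sum_univ_three] at h
    funext i
    fin_cases i <;>
      [ (show cross (X p) (Y p) 0 = 0; nlinarith [sq_nonneg (cross (X p) (Y p) 0),
          sq_nonneg (cross (X p) (Y p) 1), sq_nonneg (cross (X p) (Y p) 2)]);
        (show cross (X p) (Y p) 1 = 0; nlinarith [sq_nonneg (cross (X p) (Y p) 0),
          sq_nonneg (cross (X p) (Y p) 1), sq_nonneg (cross (X p) (Y p) 2)]);
        (show cross (X p) (Y p) 2 = 0; nlinarith [sq_nonneg (cross (X p) (Y p) 0),
          sq_nonneg (cross (X p) (Y p) 1), sq_nonneg (cross (X p) (Y p) 2)]) ]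
  have hc0 : cross (X p) (Y p) 0 = X p 1 * Y p 2 - X p 2 * Y p 1 := rfl
  have hc1 : cross (X p) (Y p) 1 = X p 2 * Y p 0 - X p 0 * Y p 2 := rfl
  have hc2 : cross (X p) (Y p) 2 = X p 0 * Y p 1 - X p 1 * Y p 0 := rfl
  have hipXp : a p 0 * X p 0 + a p 1 * X p 1 + a p 2 * X p 2 = 0 := by
    have := hipX p hp; simpa [Fin.sum_univ_three] using this
  have hipYp : a p 0 * Y p 0 + a p 1 * Y p 1 + a p 2 * Y p 2 = 0 := by
    have := hipY p hp; simpa [Fin.sum_univ_three] using this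
  have hx0 : a p 1 * cross (X p) (Y p) 2 - a p 2 * cross (X p) (Y p) 1 = 0 := by
    rw [hc1, hc2]; linear_combination X p 0 * hipYp - Y p 0 * hipXp
  have hx1 : a p 2 * cross (X p) (Y p) 0 - a p 0 * cross (X p) (Y p) 2 = 0 := by
    rw [hc0, hc2]; linear_combination X p 1 * hipYp - Y p 1 * hipXp
  have hx2 : a p 0 * cross (X p) (Y p) 1 - a p 1 * cross (X p) (Y p) 0 = 0 := by
    rw [hc0, hc1]; linear_combination X p 2 * hipYp - Y p 2 * hipXp
  set lam : ℝ := ip (a p) (cross (X p) (Y p)) / ip (cross (X p) (Y p)) (cross (X p) (Y p))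
    with hlam
  have hp0 : a p 0 = lam * cross (X p) (Y p) 0 := by
    rw [hlam, div_mul_eq_mul_div, eq_div_iff hccne]
    simp only [ip, Fin.sum_univ_three]
    linear_combination cross (X p) (Y p) 1 * hx2 - cross (X p) (Y p) 2 * hx1
  have hp1 : a p 1 = lam * cross (X p) (Y p) 1 := by
    rw [hlam, div_mul_eq_mul_div, eq_div_iff hccne]
    simp only [ip, Fin.sum_univ_three]
    linear_combination cross (X p) (Y p) 2 * hx0 - cross (X p) (Y p) 0 * hx2
  have hp2 : a p 2 = lam * cross (X p) (Y p) 2 := by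
    rw [hlam, div_mul_eq_mul_div, eq_div_iff hccne]
    simp only [ip, Fin.sum_univ_three]
    linear_combination cross (X p) (Y p) 0 * hx1 - cross (X p) (Y p) 1 * hx0
  have hane : ip (a p) (Z0 p) ≠ 0 := by
    have hgz := hGnz p hp
    intro h
    apply hgz
    simp only [ip, Fin.sum_univ_three, haq] at h
    simp only [gB, Fin.sum_univ_three]
    linear_combination h
  have hlamne : lam ≠ 0 := by
    intro h
    apply hane
    simp [ip, Fin.sum_univ_three, hp0, hp1, hp2, h]
  have hA : ip (curl a p) (a p) = lam * ip (curl a p) (cross (X p) (Y p)) := by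
    simp only [ip, Fin.sum_univ_three, hp0, hp1, hp2]
    ring
  rw [hA, hB, neg_eq_zero, mul_eq_zero, or_iff_right hlamne]
end
end

section
/- Let g be a constant real symmetric invertible 3×3 matrix and F : ℝ → ℝ smooth. On U := {(x,y,z) ∈ ℝ³ : z ≠ 0}, let φ := x/z and ψ := y/z. Then: (i) Z0 := ∇φ × ∇ψ satisfies Z0(p) = z⁻³·p for p = (x,y,z) ∈ U, and the vector field W(p) := p satisfies ∇_W W = W; (ii) the function V(p) := F(pᵀ g p) satisfies (g⁻¹∇φ)(V) = 0 and (g⁻¹∇ψ)(V) = 0 on U. -/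
noncomputable section

open ContinuousLinearMap

lemma pd_of_hasFDerivAt {f : (Fin 3 → ℝ) → ℝ} {L : (Fin 3 → ℝ) →L[ℝ] ℝ}
    {p : Fin 3 → ℝ} (h : HasFDerivAt f L p) (i : Fin 3) :
    pd i f p = L (Pi.single i 1) := by
  rw [pd, h.fderiv]

lemma hasFDerivAt_ratio (k : Fin 3) (p : Fin 3 → ℝ) (hp : p 2 ≠ 0) :
    HasFDerivAt (fun q : Fin 3 → ℝ => q k / q 2)
      ((p k) • (((-(p 2 ^ 2)⁻¹)) • (proj 2 : (Fin 3 → ℝ) →L[ℝ] ℝ)) +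
        (p 2)⁻¹ • (proj k : (Fin 3 → ℝ) →L[ℝ] ℝ)) p := by
  have h2 : HasFDerivAt (fun q : Fin 3 → ℝ => (q 2)⁻¹)
      (((-(p 2 ^ 2)⁻¹)) • (proj 2 : (Fin 3 → ℝ) →L[ℝ] ℝ)) p :=
    (hasDerivAt_inv hp).comp_hasFDerivAt p
      (proj (2 : Fin 3) : (Fin 3 → ℝ) →L[ℝ] ℝ).hasFDerivAt
  simpa [div_eq_mul_inv] using
    ((proj k : (Fin 3 → ℝ) →L[ℝ] ℝ).hasFDerivAt).fun_mul h2

lemma grad_ratio (k : Fin 3) (p : Fin 3 → ℝ) (hp : p 2 ≠ 0) (i : Fin 3) :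
    grad (fun q => q k / q 2) p i
      = p k * (-(p 2 ^ 2)⁻¹ * (if i = 2 then 1 else 0))
        + (p 2)⁻¹ * (if i = k then 1 else 0) := by
  rw [grad, pd_of_hasFDerivAt (hasFDerivAt_ratio k p hp)]
  fin_cases k <;> fin_cases i <;> simp

lemma pd_proj (i j : Fin 3) (p : Fin 3 → ℝ) :
    pd j (fun q => q i) p = if j = i then 1 else 0 := by
  have h : HasFDerivAt (fun q : Fin 3 → ℝ => q i) (proj i : (Fin 3 → ℝ) →L[ℝ] ℝ) p :=
    (proj i : (Fin 3 → ℝ) →L[ℝ] ℝ).hasFDerivAt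
  rw [pd_of_hasFDerivAt h j]
  simp [Pi.single_apply, eq_comm]

section main
variable (g : Matrix (Fin 3) (Fin 3) ℝ)

def LQ (p : Fin 3 → ℝ) : (Fin 3 → ℝ) →L[ℝ] ℝ :=
  ∑ i, ∑ j, ((g i j * p i) • (proj j : (Fin 3 → ℝ) →L[ℝ] ℝ)
      + (p j) • ((g i j) • (proj i : (Fin 3 → ℝ) →L[ℝ] ℝ)))

lemma hasFDerivAt_Q (p : Fin 3 → ℝ) :
    HasFDerivAt (fun q => gB g q q) (LQ g p) p :=
  HasFDerivAt.fun_sum fun i _ => HasFDerivAt.fun_sum fun j _ =>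
    (((proj i : (Fin 3 → ℝ) →L[ℝ] ℝ).hasFDerivAt.const_mul (g i j)).fun_mul
      (proj j : (Fin 3 → ℝ) →L[ℝ] ℝ).hasFDerivAt)

lemma LQ_apply (hsym : g.IsSymm) (p : Fin 3 → ℝ) (k : Fin 3) :
    LQ g p (Pi.single k 1) = 2 * g.mulVec p k := by
  have hs : ∀ i j, g j i = g i j := hsym.apply
  fin_cases k <;>
    simp [LQ, Fin.sum_univ_three, Matrix.mulVec, dotProduct,
      Pi.single_apply, hs 0 1, hs 0 2, hs 1 2] <;> ring

end main

set_option linter.unusedVariables false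

/-- Example 1: for `φ = x/z`, `ψ = y/z` on `z ≠ 0`:
(i) `Z0 = ∇φ × ∇ψ = z⁻³·(x,y,z)` and the field `W(p) = p` satisfies `∇_W W = W`;
(ii) for any constant symmetric invertible `g` and smooth `F`, the potential
`V(p) = F(pᵀgp)` satisfies `Z1(V) = Z2(V) = 0`. -/
theorem example1_lines_through_origin
    (g : Matrix (Fin 3) (Fin 3) ℝ) (hsym : g.IsSymm) (hinv : IsUnit g.det)
    (F : ℝ → ℝ) (hF : ContDiff ℝ (⊤ : ℕ∞) F)
    (U : Set (Fin 3 → ℝ)) (hU : U = {p | p 2 ≠ 0})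
    (φ ψ : (Fin 3 → ℝ) → ℝ)
    (hφ : φ = fun p => p 0 / p 2) (hψ : ψ = fun p => p 1 / p 2)
    (V : (Fin 3 → ℝ) → ℝ) (hV : V = fun p => F (gB g p p)) :
    (∀ p ∈ U, cross (grad φ p) (grad ψ p) = (p 2)⁻¹ ^ 3 • p) ∧
    (∀ p : Fin 3 → ℝ, nab (fun q => q) p = p) ∧
    (∀ p ∈ U, dd (g⁻¹.mulVec (grad φ p)) V p = 0 ∧
              dd (g⁻¹.mulVec (grad ψ p)) V p = 0) := by
  subst hφ hψ hV hU
  refine ⟨?_, ?_, ?_⟩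
  · -- cross product
    intro p hp
    have hp : p 2 ≠ 0 := hp
    have h0 := grad_ratio 0 p hp
    have h1 := grad_ratio 1 p hp
    have a0 : grad (fun q => q 0 / q 2) p 0 = (p 2)⁻¹ := by rw [h0]; simp
    have a1 : grad (fun q => q 0 / q 2) p 1 = 0 := by rw [h0]; simp
    have a2 : grad (fun q => q 0 / q 2) p 2 = -(p 0 * (p 2 ^ 2)⁻¹) := by rw [h0]; simp
    have b0 : grad (fun q => q 1 / q 2) p 0 = 0 := by rw [h1]; simp
    have b1 : grad (fun q => q 1 / q 2) p 1 = (p 2)⁻¹ := by rw [h1]; simp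
    have b2 : grad (fun q => q 1 / q 2) p 2 = -(p 1 * (p 2 ^ 2)⁻¹) := by rw [h1]; simp
    funext i
    fin_cases i <;>
      [show cross _ _ 0 = (p 2)⁻¹ ^ 3 * p 0; show cross _ _ 1 = (p 2)⁻¹ ^ 3 * p 1;
       show cross _ _ 2 = (p 2)⁻¹ ^ 3 * p 2] <;>
      simp only [cross, a0, a1, a2, b0, b1, b2, Matrix.cons_val_zero,
        Matrix.cons_val_one, Matrix.head_cons, Matrix.cons_val_two, Matrix.tail_cons]
    · ring
    · ring
    · field_simp
      ring
  · -- nab id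
    intro p
    funext i
    simp [nab, pd_proj, mul_ite, Finset.sum_ite_eq']
  · -- the two Z(V) = 0 equations
    intro p hp
    have hp : p 2 ≠ 0 := hp
    set D := deriv F (gB g p p) with hD
    have hdF : HasDerivAt F D (gB g p p) :=
      ((hF.differentiable (by simp)) (gB g p p)).hasDerivAt
    have hV' : HasFDerivAt (fun q => F (gB g q q)) (D • LQ g p) p :=
      HasDerivAt.comp_hasFDerivAt (f := fun q => gB g q q) p hdF (hasFDerivAt_Q g p)
    have pdV : ∀ k, pd k (fun q => F (gB g q q)) p = D * (2 * g.mulVec p k) := by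
      intro k
      rw [pd_of_hasFDerivAt hV' k]
      simp [LQ_apply g hsym p k]
    have key : ∀ u : Fin 3 → ℝ,
        dd (g⁻¹.mulVec u) (fun q => F (gB g q q)) p
          = 2 * D * dotProduct u p := by
      intro u
      have h1 : dotProduct (g⁻¹.mulVec u) (g.mulVec p)
          = dotProduct u p := by
        rw [Matrix.dotProduct_mulVec]
        congr 1
        rw [← Matrix.mulVec_transpose, hsym.eq,
          Matrix.mulVec_mulVec, Matrix.mul_nonsing_inv g hinv, Matrix.one_mulVec]
      rw [← h1]
      have e1 : dd (g⁻¹.mulVec u) (fun q => F (gB g q q)) p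
          = ∑ k, (g⁻¹.mulVec u) k * (D * (2 * g.mulVec p k)) :=
        Finset.sum_congr rfl fun k _ => by rw [pdV]
      rw [e1, dotProduct, Finset.mul_sum]
      exact Finset.sum_congr rfl fun k _ => by ring
    have hz0 : ∀ k : Fin 3, k = 0 ∨ k = 1 →
        dotProduct (grad (fun p => p k / p 2) p) p = 0 := by
      intro k hk
      have h := grad_ratio k p hp
      rcases hk with rfl | rfl <;>
        simp [dotProduct, Fin.sum_univ_three, h] <;> field_simp <;> ring
    exact ⟨by rw [key, hz0 0 (Or.inl rfl), mul_zero],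
           by rw [key, hz0 1 (Or.inr rfl), mul_zero]⟩
end
end

section
/- Let φ := xyz + x + y, ψ := z, and Z0' := (xz+1) ∂/∂x − (yz+1) ∂/∂y (a rescaling of ∇φ × ∇ψ). Then for every constant real symmetric invertible 3×3 matrix g, the function ⟨curl(g·Z0'), g·Z0'⟩ is not identically zero on ℝ³; i.e. there is no non-singular constant symmetric g making the g-orthogonal complement of Z0' an integrable distribution. -/
noncomputable section

open ContinuousLinearMap in
lemma pd_aff (a b c : ℝ) (j : Fin 3) (p : Fin 3 → ℝ) :
    pd j (fun q : Fin 3 → ℝ => a * (q 0 * q 2) + b * (q 1 * q 2) + c) p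
      = a * ((Pi.single j 1 : Fin 3 → ℝ) 0 * p 2 + p 0 * (Pi.single j 1 : Fin 3 → ℝ) 2)
        + b * ((Pi.single j 1 : Fin 3 → ℝ) 1 * p 2 + p 1 * (Pi.single j 1 : Fin 3 → ℝ) 2) := by
  have h0 : HasFDerivAt (fun q : Fin 3 → ℝ => q 0) (proj (0:Fin 3) : (Fin 3 → ℝ) →L[ℝ] ℝ) p := hasFDerivAt_apply 0 p
  have h1 : HasFDerivAt (fun q : Fin 3 → ℝ => q 1) (proj (1:Fin 3) : (Fin 3 → ℝ) →L[ℝ] ℝ) p := hasFDerivAt_apply 1 p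
  have h2 : HasFDerivAt (fun q : Fin 3 → ℝ => q 2) (proj (2:Fin 3) : (Fin 3 → ℝ) →L[ℝ] ℝ) p := hasFDerivAt_apply 2 p
  have H : HasFDerivAt (fun q : Fin 3 → ℝ => a * (q 0 * q 2) + b * (q 1 * q 2) + c)
      ((a • (p 0 • (proj (2:Fin 3) : (Fin 3 → ℝ) →L[ℝ] ℝ) + p 2 • proj 0)
        + b • (p 1 • (proj (2:Fin 3) : (Fin 3 → ℝ) →L[ℝ] ℝ) + p 2 • proj 1)) + 0) p :=
    (((h0.mul h2).const_mul a).add ((h1.mul h2).const_mul b)).add (hasFDerivAt_const c p)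
  rw [pd, H.fderiv]
  simp [ContinuousLinearMap.proj]
  ring

set_option linter.unusedVariables false

/-- Example 4: for `φ = xyz + x + y`, `ψ = z`, with
`Z0' = (xz+1)∂x − (yz+1)∂y`, no constant symmetric invertible `g` makes the
`g`-orthogonal complement of `Z0'` integrable: `⟨curl(g·Z0'), g·Z0'⟩ ≢ 0` on `ℝ³`. -/
theorem example4_no_case1
    (φ ψ : (Fin 3 → ℝ) → ℝ)
    (hφ : φ = fun p => p 0 * p 1 * p 2 + p 0 + p 1) (hψ : ψ = fun p => p 2)
    (Z0' : (Fin 3 → ℝ) → (Fin 3 → ℝ))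
    (hZ0' : Z0' = fun p => ![p 0 * p 2 + 1, -(p 1 * p 2 + 1), 0]) :
    ∀ g : Matrix (Fin 3) (Fin 3) ℝ, g.IsSymm → IsUnit g.det →
      ¬ (∀ p : Fin 3 → ℝ,
          ip (curl (fun q => g.mulVec (Z0' q)) p) (g.mulVec (Z0' p)) = 0) := by
  intro g hsymm hdet hall
  have hF : ∀ i : Fin 3, (fun q : Fin 3 → ℝ => g.mulVec (Z0' q) i)
      = fun q : Fin 3 → ℝ => (g i 0) * (q 0 * q 2) + (-(g i 1)) * (q 1 * q 2) + (g i 0 - g i 1) := by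
    intro i
    funext q
    subst hZ0'
    simp [Matrix.mulVec, dotProduct, Fin.sum_univ_three]
    ring
  have hpd : ∀ (i j : Fin 3) (p : Fin 3 → ℝ),
      pd j (fun q : Fin 3 → ℝ => g.mulVec (Z0' q) i) p
        = g i 0 * ((Pi.single j 1 : Fin 3 → ℝ) 0 * p 2 + p 0 * (Pi.single j 1 : Fin 3 → ℝ) 2)
          - g i 1 * ((Pi.single j 1 : Fin 3 → ℝ) 1 * p 2 + p 1 * (Pi.single j 1 : Fin 3 → ℝ) 2) := by
    intro i j p
    rw [hF i, pd_aff]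
    ring
  have hval : ∀ p : Fin 3 → ℝ,
      ip (curl (fun q => g.mulVec (Z0' q)) p) (g.mulVec (Z0' p))
        = p 2 * (g 1 1 * g 2 0) - p 2 * (g 1 0 * g 2 1) + p 2 * (g 0 1 * g 2 0)
          - p 2 * (g 0 0 * g 2 1) - p 1 * (g 0 1 * g 1 0) + p 1 * (g 0 0 * g 1 1)
          + p 1 * p 2 ^ 2 * (g 1 1 * g 2 0) - p 1 * p 2 ^ 2 * (g 1 0 * g 2 1)
          + p 0 * (g 0 1 * g 1 0) - p 0 * (g 0 0 * g 1 1)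
          + p 0 * p 2 ^ 2 * (g 0 1 * g 2 0) - p 0 * p 2 ^ 2 * (g 0 0 * g 2 1) := by
    intro p
    simp only [ip, curl, Fin.sum_univ_three, Matrix.cons_val_zero, Matrix.cons_val_one,
      Matrix.head_cons, Matrix.cons_val_two, Matrix.tail_cons, hpd]
    rw [hZ0']
    simp [Matrix.mulVec, dotProduct, Fin.sum_univ_three, Pi.single_apply]
    ring
  have E1 := hall ![1, 0, 0]
  have E2 := hall ![0, 0, 1]
  have E3 := hall ![0, 1, 1]
  rw [hval] at E1 E2 E3
  simp only [Matrix.cons_val_zero, Matrix.cons_val_one, Matrix.head_cons,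
    Matrix.cons_val_two, Matrix.tail_cons] at E1 E2 E3
  have s1 : g 1 0 = g 0 1 := hsymm.apply 0 1
  have s2 : g 2 0 = g 0 2 := hsymm.apply 0 2
  have s3 : g 2 1 = g 1 2 := hsymm.apply 1 2
  have hdet0 : g.det = 0 := by
    rw [s1, s2, s3] at E1 E2 E3
    rw [Matrix.det_fin_three, s1, s2, s3]
    linear_combination (-(g 2 2) - g 1 2 - g 0 2) * E1 + (2 * g 1 2 + g 0 2) * E2
      + (-(g 1 2) - g 0 2) * E3
  rw [hdet0] at hdet
  simp at hdet
end
end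

section
/- Let U := {(x,y,z) ∈ ℝ³ : x ≠ 0 and y ≠ 0}, φ := ½(x²+y²), ψ := z/x, and let Z0' := xy ∂/∂x − x² ∂/∂y + yz ∂/∂z (a rescaling of ∇φ × ∇ψ on U), Z1 := ∇φ = (x, y, 0), X' := −z ∂/∂x + x ∂/∂z. One has ∇_{Z0'}Z0'(φ) = −x²(x²+y²) ≠ 0 on U; set A := ½⟨Z0', Z0'⟩ / ∇_{Z0'}Z0'(φ). Then for any constants C₁, C₂, C₃, the function V := C₁(x²+y²+z²) + C₂/y² − C₃/(x²+z²) satisfies X'(V) = 0 and A·Z0'(Z1(V)) = Z0'(V) − Z0'(A)·Z1(V) on U. -/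
noncomputable section

private lemma hproj (i : Fin 3) (p : Fin 3 → ℝ) :
    HasFDerivAt (fun q : Fin 3 → ℝ => q i)
      (ContinuousLinearMap.proj i : (Fin 3 → ℝ) →L[ℝ] ℝ) p :=
  (ContinuousLinearMap.proj (R := ℝ) (φ := fun _ : Fin 3 => ℝ) i).hasFDerivAt

private lemma HasFDerivAt.cinv {f : (Fin 3 → ℝ) → ℝ} {f' : (Fin 3 → ℝ) →L[ℝ] ℝ} {p}
    (h : HasFDerivAt f f' p) (hf : f p ≠ 0) :
    HasFDerivAt (fun q => (f q)⁻¹) ((-(f p ^ 2)⁻¹) • f') p := by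
  have h2 := (hasFDerivAt_inv hf).comp p h
  exact h2.congr_fderiv (by ext v; simp [mul_comm])

private lemma pd_single {f : (Fin 3 → ℝ) → ℝ} {f' : (Fin 3 → ℝ) →L[ℝ] ℝ} {p}
    (h : HasFDerivAt f f' p) (i : Fin 3) :
    pd i f p = f' (Pi.single i 1) := by rw [pd, h.fderiv]

private lemma pd_congr {f g : (Fin 3 → ℝ) → ℝ} {p} (h : f =ᶠ[nhds p] g) (i : Fin 3) :
    pd i f p = pd i g p := by unfold pd; rw [h.fderiv_eq]


private lemma finmk2 : (⟨2, by omega⟩ : Fin 3) = 2 := rfl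
private lemma sing_same (i : Fin 3) : (Pi.single i 1 : Fin 3 → ℝ) i = 1 := Pi.single_eq_same i 1
private lemma sing01 : (Pi.single 0 1 : Fin 3 → ℝ) 1 = 0 := Pi.single_eq_of_ne (by decide) 1
private lemma sing02 : (Pi.single 0 1 : Fin 3 → ℝ) 2 = 0 := Pi.single_eq_of_ne (by decide) 1
private lemma sing10 : (Pi.single 1 1 : Fin 3 → ℝ) 0 = 0 := Pi.single_eq_of_ne (by decide) 1
private lemma sing12 : (Pi.single 1 1 : Fin 3 → ℝ) 2 = 0 := Pi.single_eq_of_ne (by decide) 1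
private lemma sing20 : (Pi.single 2 1 : Fin 3 → ℝ) 0 = 0 := Pi.single_eq_of_ne (by decide) 1
private lemma sing21 : (Pi.single 2 1 : Fin 3 → ℝ) 1 = 0 := Pi.single_eq_of_ne (by decide) 1

private lemma pd_phi (q : Fin 3 → ℝ) (i : Fin 3) :
    pd i (fun r : Fin 3 → ℝ => 1/2 * (r 0 ^ 2 + r 1 ^ 2)) q = ![q 0, q 1, 0] i := by
  have e : (fun r : Fin 3 → ℝ => 1/2 * (r 0 ^ 2 + r 1 ^ 2))
      = fun r : Fin 3 → ℝ => 1/2 * (r 0 * r 0 + r 1 * r 1) := by funext r; ring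
  erw [e, pd_single (((hproj 0 q).mul (hproj 0 q)).add ((hproj 1 q).mul (hproj 1 q))
    |>.const_mul (1/2:ℝ)) i]
  fin_cases i <;> norm_num [Pi.single_apply, Fin.ext_iff] <;> ring

private lemma pd_c0 (q : Fin 3 → ℝ) (i : Fin 3) :
    pd i (fun r : Fin 3 → ℝ => r 0 * r 1) q = ![q 1, q 0, 0] i := by
  erw [pd_single ((hproj 0 q).mul (hproj 1 q)) i]
  fin_cases i <;> norm_num [Pi.single_apply, Fin.ext_iff]

private lemma pd_c1 (q : Fin 3 → ℝ) (i : Fin 3) :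
    pd i (fun r : Fin 3 → ℝ => -(r 0 ^ 2)) q = ![-(2*q 0), 0, 0] i := by
  have e : (fun r : Fin 3 → ℝ => -(r 0 ^ 2)) = fun r : Fin 3 → ℝ => -(r 0 * r 0) := by
    funext r; ring
  erw [e, pd_single ((hproj 0 q).mul (hproj 0 q)).neg i]
  fin_cases i <;> norm_num [Pi.single_apply, Fin.ext_iff] <;> ring

private lemma pd_c2 (q : Fin 3 → ℝ) (i : Fin 3) :
    pd i (fun r : Fin 3 → ℝ => r 1 * r 2) q = ![0, q 2, q 1] i := by
  erw [pd_single ((hproj 1 q).mul (hproj 2 q)) i]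
  fin_cases i <;> norm_num [Pi.single_apply, Fin.ext_iff]

private lemma pd_V (C₁ C₂ C₃ : ℝ) (q : Fin 3 → ℝ) (h1 : q 1 ≠ 0) (h2 : q 0^2 + q 2^2 ≠ 0)
    (i : Fin 3) :
    pd i (fun r : Fin 3 → ℝ => C₁ * (r 0 ^ 2 + r 1 ^ 2 + r 2 ^ 2) + C₂ / r 1 ^ 2
        - C₃ / (r 0 ^ 2 + r 2 ^ 2)) q
    = ![2*C₁*q 0 + 2*C₃*q 0/(q 0^2+q 2^2)^2,
        2*C₁*q 1 - 2*C₂/q 1^3,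
        2*C₁*q 2 + 2*C₃*q 2/(q 0^2+q 2^2)^2] i := by
  have h1' : q 1 * q 1 ≠ 0 := mul_ne_zero h1 h1
  have h2' : q 0 * q 0 + q 2 * q 2 ≠ 0 := by simpa [pow_two] using h2
  have e : (fun r : Fin 3 → ℝ => C₁ * (r 0 ^ 2 + r 1 ^ 2 + r 2 ^ 2) + C₂ / r 1 ^ 2
        - C₃ / (r 0 ^ 2 + r 2 ^ 2))
      = fun r : Fin 3 → ℝ => C₁ * (r 0 * r 0 + r 1 * r 1 + r 2 * r 2)
          + C₂ * (r 1 * r 1)⁻¹ - C₃ * (r 0 * r 0 + r 2 * r 2)⁻¹ := by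
    funext r; ring
  erw [e, pd_single (((((hproj 0 q).mul (hproj 0 q)).add ((hproj 1 q).mul (hproj 1 q))).add
        ((hproj 2 q).mul (hproj 2 q)) |>.const_mul C₁).add
      ((((hproj 1 q).mul (hproj 1 q)).cinv h1').const_mul C₂) |>.sub
      (((((hproj 0 q).mul (hproj 0 q)).add ((hproj 2 q).mul (hproj 2 q))).cinv h2').const_mul C₃))
    i]
  fin_cases i <;> norm_num [Pi.single_apply, Fin.ext_iff] <;> field_simp <;> ring

set_option maxHeartbeats 1000000 in
private lemma pd_A (q : Fin 3 → ℝ) (h0 : q 0 ≠ 0) (i : Fin 3) :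
    pd i (fun r : Fin 3 → ℝ =>
        (r 0^2*r 1^2 + r 0^4 + r 1^2*r 2^2) / (-2*(r 0^2*(r 0^2 + r 1^2)))) q
    = ![((2*q 0*q 1^2+4*q 0^3) * (-2*(q 0^2*(q 0^2 + q 1^2)))
          - (q 0^2*q 1^2 + q 0^4 + q 1^2*q 2^2) * (-8*q 0^3-4*q 0*q 1^2))
          / (-2*(q 0^2*(q 0^2 + q 1^2)))^2,
        ((2*q 0^2*q 1+2*q 1*q 2^2) * (-2*(q 0^2*(q 0^2 + q 1^2)))
          - (q 0^2*q 1^2 + q 0^4 + q 1^2*q 2^2) * (-4*q 0^2*q 1))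
          / (-2*(q 0^2*(q 0^2 + q 1^2)))^2,
        (2*q 1^2*q 2) / (-2*(q 0^2*(q 0^2 + q 1^2)))] i := by
  have h00 : (0:ℝ) < q 0 * q 0 := mul_self_pos.mpr h0
  have hD : (-2:ℝ) * (q 0 * q 0 * (q 0 * q 0 + q 1 * q 1)) ≠ 0 :=
    ne_of_lt (by nlinarith [mul_self_nonneg (q 1)])
  have k1 : -(q 0^2*q 1^2*2) - q 0^4*2 ≠ 0 := ne_of_lt (by nlinarith [mul_self_nonneg (q 1)])
  have k2 : q 0^4*q 1^4*4 + q 0^6*q 1^2*8 + q 0^8*4 ≠ 0 := by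
    have e2 : q 0^4*q 1^4*4 + q 0^6*q 1^2*8 + q 0^8*4 = (q 0^2*q 1^2*2 + q 0^4*2)^2 := by ring
    rw [e2]
    exact pow_ne_zero 2 (ne_of_gt (by nlinarith [mul_self_nonneg (q 1)]))
  have k3 : q 1^2*q 0^2*2 + q 0^4*2 ≠ 0 := ne_of_gt (by nlinarith [mul_self_nonneg (q 1)])
  have e : (fun r : Fin 3 → ℝ =>
        (r 0^2*r 1^2 + r 0^4 + r 1^2*r 2^2) / (-2*(r 0^2*(r 0^2 + r 1^2))))
      = fun r : Fin 3 → ℝ =>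
        (r 0 * r 0 * (r 1 * r 1) + r 0 * r 0 * (r 0 * r 0) + r 1 * r 1 * (r 2 * r 2))
          * ((-2) * (r 0 * r 0 * (r 0 * r 0 + r 1 * r 1)))⁻¹ := by
    funext r; ring
  have hN := ((((hproj 0 q).mul (hproj 0 q)).mul ((hproj 1 q).mul (hproj 1 q))).add
      (((hproj 0 q).mul (hproj 0 q)).mul ((hproj 0 q).mul (hproj 0 q)))).add
      (((hproj 1 q).mul (hproj 1 q)).mul ((hproj 2 q).mul (hproj 2 q)))
  have hDen := ((((hproj 0 q).mul (hproj 0 q)).mul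
      (((hproj 0 q).mul (hproj 0 q)).add ((hproj 1 q).mul (hproj 1 q)))).const_mul
      (-2:ℝ)).cinv hD
  erw [e, pd_single (hN.mul hDen) i]
  fin_cases i <;>
    simp only [ContinuousLinearMap.add_apply, ContinuousLinearMap.sub_apply,
      ContinuousLinearMap.smul_apply, ContinuousLinearMap.neg_apply,
      ContinuousLinearMap.proj_apply, smul_eq_mul,
      Pi.mul_apply, Pi.add_apply, Pi.sub_apply, Pi.neg_apply,
      finmk2, Fin.zero_eta, Fin.mk_one, sing_same, sing01, sing02, sing10, sing12, sing20, sing21,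
      Matrix.cons_val_zero, Matrix.cons_val_one, Matrix.head_cons,
      Matrix.cons_val_two, Matrix.tail_cons] <;>
    field_simp <;> ring

set_option maxHeartbeats 1000000 in
private lemma pd_W (C₁ C₂ C₃ : ℝ) (q : Fin 3 → ℝ) (h1 : q 1 ≠ 0) (h2 : q 0^2 + q 2^2 ≠ 0)
    (i : Fin 3) :
    pd i (fun r : Fin 3 → ℝ =>
        r 0 * (2*C₁*r 0 + 2*C₃*r 0/(r 0^2+r 2^2)^2) + r 1 * (2*C₁*r 1 - 2*C₂/r 1^3)) q
    = ![4*C₁*q 0 + 4*C₃*q 0*(q 2^2-q 0^2)/(q 0^2+q 2^2)^3,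
        4*C₁*q 1 + 4*C₂/q 1^3,
        -(8*C₃*q 0^2*q 2)/(q 0^2+q 2^2)^3] i := by
  have h1' : q 1 * (q 1 * q 1) ≠ 0 := mul_ne_zero h1 (mul_ne_zero h1 h1)
  have h2' : q 0 * q 0 + q 2 * q 2 ≠ 0 := by simpa [pow_two] using h2
  have h2'' : (q 0 * q 0 + q 2 * q 2) * (q 0 * q 0 + q 2 * q 2) ≠ 0 := mul_ne_zero h2' h2'
  have m3 : q 0^2*q 2^4*3 + q 0^4*q 2^2*3 + q 0^6 + q 2^6 ≠ 0 := by
    have e3 : q 0^2*q 2^4*3 + q 0^4*q 2^2*3 + q 0^6 + q 2^6 = (q 0^2 + q 2^2)^3 := by ring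
    rw [e3]; exact pow_ne_zero 3 h2
  have m4 : q 0^2*q 2^6*4 + q 0^4*q 2^4*6 + q 0^6*q 2^2*4 + q 0^8 + q 2^8 ≠ 0 := by
    have e4 : q 0^2*q 2^6*4 + q 0^4*q 2^4*6 + q 0^6*q 2^2*4 + q 0^8 + q 2^8
        = (q 0^2 + q 2^2)^4 := by ring
    rw [e4]; exact pow_ne_zero 4 h2
  have m2 : q 0^2*q 2^2*2 + q 0^4 + q 2^4 ≠ 0 := by
    have e2 : q 0^2*q 2^2*2 + q 0^4 + q 2^4 = (q 0^2 + q 2^2)^2 := by ring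
    rw [e2]; exact pow_ne_zero 2 h2
  have e : (fun r : Fin 3 → ℝ =>
        r 0 * (2*C₁*r 0 + 2*C₃*r 0/(r 0^2+r 2^2)^2) + r 1 * (2*C₁*r 1 - 2*C₂/r 1^3))
      = fun r : Fin 3 → ℝ =>
        r 0 * (2*C₁*r 0 + 2*C₃*r 0 * ((r 0 * r 0 + r 2 * r 2) * (r 0 * r 0 + r 2 * r 2))⁻¹)
          + r 1 * (2*C₁*r 1 - 2*C₂ * (r 1 * (r 1 * r 1))⁻¹) := by
    funext r; ring
  have ha := ((hproj 0 q).const_mul (2*C₁)).add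
    (((hproj 0 q).const_mul (2*C₃)).mul
      ((((hproj 0 q).mul (hproj 0 q)).add ((hproj 2 q).mul (hproj 2 q)) |>.mul
        (((hproj 0 q).mul (hproj 0 q)).add ((hproj 2 q).mul (hproj 2 q)))).cinv h2''))
  have hb := ((hproj 1 q).const_mul (2*C₁)).sub
    ((((hproj 1 q).mul ((hproj 1 q).mul (hproj 1 q))).cinv h1').const_mul (2*C₂))
  erw [e, pd_single (((hproj 0 q).mul ha).add ((hproj 1 q).mul hb)) i]
  fin_cases i <;>
    simp only [ContinuousLinearMap.add_apply, ContinuousLinearMap.sub_apply,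
      ContinuousLinearMap.smul_apply, ContinuousLinearMap.neg_apply,
      ContinuousLinearMap.proj_apply, smul_eq_mul,
      Pi.mul_apply, Pi.add_apply, Pi.sub_apply, Pi.neg_apply,
      finmk2, Fin.zero_eta, Fin.mk_one, sing_same, sing01, sing02, sing10, sing12, sing20, sing21,
      Matrix.cons_val_zero, Matrix.cons_val_one, Matrix.head_cons,
      Matrix.cons_val_two, Matrix.tail_cons] <;>
    field_simp <;> ring

set_option linter.unusedVariables false

/-- Example 5, Euclidean metric: for `φ = ½(x²+y²)`, `ψ = z/x` on
`{x ≠ 0, y ≠ 0}`, with `Z0' = xy∂x − x²∂y + yz∂z`, `Z1 = ∇φ = (x,y,0)`,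
`X' = −z∂x + x∂z`: one has `∇_{Z0'}Z0'(φ) = −x²(x²+y²) ≠ 0`, and the potential
`V = C₁(x²+y²+z²) + C₂/y² − C₃/(x²+z²)` satisfies `X'(V) = 0` and the energy-free
equation `A·Z0'(Z1(V)) = Z0'(V) − Z0'(A)·Z1(V)`. -/
theorem example5_euclidean
    (C₁ C₂ C₃ : ℝ)
    (U : Set (Fin 3 → ℝ)) (hU : U = {p | p 0 ≠ 0 ∧ p 1 ≠ 0})
    (φ ψ : (Fin 3 → ℝ) → ℝ)
    (hφ : φ = fun p => 1/2 * (p 0 ^ 2 + p 1 ^ 2)) (hψ : ψ = fun p => p 2 / p 0)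
    (Z0' Z1 X' : (Fin 3 → ℝ) → (Fin 3 → ℝ))
    (hZ0' : Z0' = fun p => ![p 0 * p 1, -(p 0 ^ 2), p 1 * p 2])
    (hZ1 : Z1 = fun p => ![p 0, p 1, 0])
    (hX' : X' = fun p => ![-(p 2), 0, p 0])
    (A : (Fin 3 → ℝ) → ℝ)
    (hA : A = fun p => 1/2 * ip (Z0' p) (Z0' p) / dd (nab Z0' p) φ p)
    (V : (Fin 3 → ℝ) → ℝ)
    (hV : V = fun p => C₁ * (p 0 ^ 2 + p 1 ^ 2 + p 2 ^ 2) + C₂ / p 1 ^ 2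
                        - C₃ / (p 0 ^ 2 + p 2 ^ 2)) :
    ∀ p ∈ U,
      dd (nab Z0' p) φ p = -(p 0 ^ 2) * (p 0 ^ 2 + p 1 ^ 2) ∧
      dd (nab Z0' p) φ p ≠ 0 ∧
      dd (X' p) V p = 0 ∧
      A p * dd (Z0' p) (fun q => dd (Z1 q) V q) p
          = dd (Z0' p) V p - dd (Z0' p) A p * dd (Z1 p) V p := by
  subst hφ hψ hZ0' hZ1 hX' hV hU
  intro p hp
  obtain ⟨hx, hy⟩ := hp
  have h00 : (0:ℝ) < p 0 * p 0 := mul_self_pos.mpr hx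
  have hxz : p 0 ^ 2 + p 2 ^ 2 ≠ 0 := ne_of_gt (by nlinarith [mul_self_nonneg (p 2)])
  have key : ∀ q : Fin 3 → ℝ,
      dd (nab (fun p => ![p 0 * p 1, -(p 0 ^ 2), p 1 * p 2]) q)
        (fun p => 1/2 * (p 0 ^ 2 + p 1 ^ 2)) q = -(q 0 ^ 2) * (q 0 ^ 2 + q 1 ^ 2) := by
    intro q
    simp only [dd, nab, Fin.sum_univ_three, Matrix.cons_val_zero, Matrix.cons_val_one,
      Matrix.head_cons, Matrix.cons_val_two, Matrix.tail_cons,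
      pd_c0, pd_c1, pd_c2, pd_phi]
    ring
  have hA' : A = fun q : Fin 3 → ℝ =>
      (q 0^2*q 1^2 + q 0^4 + q 1^2*q 2^2) / (-2*(q 0^2*(q 0^2 + q 1^2))) := by
    rw [hA]; funext q; rw [key q]
    simp only [ip, Fin.sum_univ_three, Matrix.cons_val_zero, Matrix.cons_val_one,
      Matrix.head_cons, Matrix.cons_val_two, Matrix.tail_cons]
    rcases eq_or_ne (q 0) 0 with h | h
    · simp [h]
    · have hq00 : (0:ℝ) < q 0 * q 0 := mul_self_pos.mpr h
      have hD0 : -q 0 ^ 2 * (q 0 ^ 2 + q 1 ^ 2) ≠ 0 :=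
        ne_of_lt (by nlinarith [mul_self_nonneg (q 1)])
      have hD0' : (-2:ℝ) * (q 0 ^ 2 * (q 0 ^ 2 + q 1 ^ 2)) ≠ 0 :=
        ne_of_lt (by nlinarith [mul_self_nonneg (q 1)])
      rw [div_eq_div_iff hD0 hD0']
      ring
  clear hA
  subst hA'
  refine ⟨key p, ?_, ?_, ?_⟩
  · rw [key p]
    exact mul_ne_zero (neg_ne_zero.mpr (pow_ne_zero 2 hx))
      (ne_of_gt (by nlinarith [mul_self_nonneg (p 1)]))
  · simp only [dd, Fin.sum_univ_three, Matrix.cons_val_zero, Matrix.cons_val_one,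
      Matrix.head_cons, Matrix.cons_val_two, Matrix.tail_cons,
      pd_V C₁ C₂ C₃ p hy hxz]
    ring
  · have hopen : IsOpen {q : Fin 3 → ℝ | q 1 ≠ 0 ∧ q 0^2 + q 2^2 ≠ 0} := by
      have e : {q : Fin 3 → ℝ | q 1 ≠ 0 ∧ q 0^2 + q 2^2 ≠ 0}
          = ((fun q : Fin 3 → ℝ => q 1) ⁻¹' {(0:ℝ)}ᶜ)
            ∩ ((fun q : Fin 3 → ℝ => q 0^2 + q 2^2) ⁻¹' {(0:ℝ)}ᶜ) := by
        ext q
        simp [Set.mem_setOf_eq]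
      rw [e]
      exact (isOpen_compl_singleton.preimage (continuous_apply 1)).inter
        (isOpen_compl_singleton.preimage (by continuity))
    have hEq : (fun q => dd ((fun p : Fin 3 → ℝ => ![p 0, p 1, 0]) q)
          ((fun p : Fin 3 → ℝ => C₁ * (p 0 ^ 2 + p 1 ^ 2 + p 2 ^ 2) + C₂ / p 1 ^ 2
            - C₃ / (p 0 ^ 2 + p 2 ^ 2))) q)
        =ᶠ[nhds p] (fun r : Fin 3 → ℝ =>
          r 0 * (2*C₁*r 0 + 2*C₃*r 0/(r 0^2+r 2^2)^2) + r 1 * (2*C₁*r 1 - 2*C₂/r 1^3)) := by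
      filter_upwards [hopen.mem_nhds ⟨hy, hxz⟩] with q hq
      simp only [dd, Fin.sum_univ_three, Matrix.cons_val_zero, Matrix.cons_val_one,
        Matrix.head_cons, Matrix.cons_val_two, Matrix.tail_cons,
        pd_V C₁ C₂ C₃ q hq.1 hq.2]
      ring
    have h4 : dd ((fun p : Fin 3 → ℝ => ![p 0 * p 1, -(p 0 ^ 2), p 1 * p 2]) p)
        (fun q => dd ((fun p : Fin 3 → ℝ => ![p 0, p 1, 0]) q)
          ((fun p : Fin 3 → ℝ => C₁ * (p 0 ^ 2 + p 1 ^ 2 + p 2 ^ 2) + C₂ / p 1 ^ 2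
            - C₃ / (p 0 ^ 2 + p 2 ^ 2))) q) p
        = dd ((fun p : Fin 3 → ℝ => ![p 0 * p 1, -(p 0 ^ 2), p 1 * p 2]) p)
          (fun r : Fin 3 → ℝ =>
            r 0 * (2*C₁*r 0 + 2*C₃*r 0/(r 0^2+r 2^2)^2) + r 1 * (2*C₁*r 1 - 2*C₂/r 1^3)) p :=
      Finset.sum_congr rfl (fun i _ => by rw [pd_congr hEq i])
    rw [h4]
    have hD2 : (-2:ℝ) * (p 0^2*(p 0^2+p 1^2)) ≠ 0 :=
      ne_of_lt (by nlinarith [mul_self_nonneg (p 1)])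
    have hp12 : p 0^2 + p 1^2 ≠ 0 := ne_of_gt (by nlinarith [mul_self_nonneg (p 1)])
    simp only [dd, Fin.sum_univ_three, Matrix.cons_val_zero, Matrix.cons_val_one,
      Matrix.head_cons, Matrix.cons_val_two, Matrix.tail_cons,
      pd_V C₁ C₂ C₃ p hy hxz, pd_W C₁ C₂ C₃ p hy hxz, pd_A p hx]
    field_simp [hy, hxz, hD2, hp12, hx]
    ring
end
end

section
/- Let g be a real symmetric 3×3 matrix with entries g_{ij}. Then g is invertible and satisfies the three equations g₂₃(g₁₁+g₁₂) = g₁₃(g₂₂+g₁₂), g₃₃(g₁₂−g₁₁) = g₁₃(g₂₃−g₁₃), and g₃₃(g₂₂−g₁₂) = g₂₃(g₂₃−g₁₃), if and only if g₁₃ = g₂₃ ≠ 0, g₃₃ = 0, g₂₂ = g₁₁, and g₁₁ ≠ g₁₂. -/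
noncomputable section

set_option linter.unusedVariables false

/-- Section 6, algebraic classification: a real symmetric 3×3 matrix `g`
is invertible and satisfies the three Case-1 equations iff
`g₁₃ = g₂₃ ≠ 0`, `g₃₃ = 0`, `g₂₂ = g₁₁` and `g₁₁ ≠ g₁₂`. -/
theorem case1_metric_classification
    (g : Matrix (Fin 3) (Fin 3) ℝ) (hsym : g.IsSymm) :
    (IsUnit g.det ∧
      g 1 2 * (g 0 0 + g 0 1) = g 0 2 * (g 1 1 + g 0 1) ∧
      g 2 2 * (g 0 1 - g 0 0) = g 0 2 * (g 1 2 - g 0 2) ∧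
      g 2 2 * (g 1 1 - g 0 1) = g 1 2 * (g 1 2 - g 0 2)) ↔
    (g 0 2 = g 1 2 ∧ g 0 2 ≠ 0 ∧ g 2 2 = 0 ∧ g 1 1 = g 0 0 ∧ g 0 0 ≠ g 0 1) := by
  have s10 : g 1 0 = g 0 1 := hsym.apply 0 1
  have s20 : g 2 0 = g 0 2 := hsym.apply 0 2
  have s21 : g 2 1 = g 1 2 := hsym.apply 1 2
  set a := g 0 0 with ha
  set b := g 0 1 with hb
  set c := g 0 2 with hc
  set d := g 1 1 with hd
  set e := g 1 2 with he
  set f := g 2 2 with hf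
  have hdet : g.det = a*d*f - a*e^2 - b^2*f + 2*b*c*e - c^2*d := by
    rw [Matrix.det_fin_three, s10, s20, s21]; ring
  constructor
  · rintro ⟨hu, h1, h2, h3⟩
    have hdne : a*d*f - a*e^2 - b^2*f + 2*b*c*e - c^2*d ≠ 0 := by
      rw [← hdet]; exact hu.ne_zero ∘ (by intro h; rw [h])
    have hec : e = c := by
      by_contra hec
      have hfne : f ≠ 0 := by
        intro hf0
        apply hec
        have : (e - c)^2 = 0 := by
          rw [hf0] at h2 h3
          nlinarith [h2, h3]
        have := pow_eq_zero_iff (n := 2) (by norm_num) |>.mp this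
        linarith [sub_eq_zero.mp this]
      have hecne : e - c ≠ 0 := sub_ne_zero.mpr hec
      have haf : a * f = c^2 := by
        have h4 : 2*(a*f - c^2)*(e-c) = 0 := by
          linear_combination f*h1 - (e-2*c)*h2 + c*h3
        have := mul_eq_zero.mp h4
        rcases this with h | h
        · have := mul_eq_zero.mp h
          rcases this with h' | h'
          · norm_num at h'
          · linarith [sub_eq_zero.mp (by linarith : a*f - c^2 - 0 = 0)]
        · exact absurd h hecne
      have hbf : b * f = c * e := by linear_combination h2 + haf
      have hT : (a*d*f - a*e^2 - b^2*f + 2*b*c*e - c^2*d) * f = 0 := by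
        linear_combination (d*f - e^2)*haf + (-(b*f) + c*e)*hbf
      exact hdne (by
        rcases mul_eq_zero.mp hT with h | h
        · exact h
        · exact absurd h hfne)
    have hf0 : f = 0 := by
      by_contra hfne
      apply hdne
      have hba : b = a := by
        have : f * (b - a) = 0 := by rw [h2, hec]; ring
        rcases mul_eq_zero.mp this with h | h
        · exact absurd h hfne
        · linarith [sub_eq_zero.mp h]
      have hdb : d = b := by
        have : f * (d - b) = 0 := by rw [h3, hec]; ring
        rcases mul_eq_zero.mp this with h | h
        · exact absurd h hfne
        · linarith [sub_eq_zero.mp h]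
      rw [hec, hba, hdb, hba]; ring
    have hcne : c ≠ 0 := by
      intro hc0
      apply hdne
      rw [hec, hc0, hf0]; ring
    have hda : d = a := by
      have : c * (a - d) = 0 := by rw [hec] at h1; linarith [h1]
      rcases mul_eq_zero.mp this with h | h
      · exact absurd h hcne
      · linarith [sub_eq_zero.mp h]
    refine ⟨hec.symm, hcne, hf0, hda, ?_⟩
    intro hab
    apply hdne
    rw [hec, hf0, hda, ← hab]; ring
  · rintro ⟨hce, hcne, hf0, hda, hab⟩
    have hec : e = c := hce.symm
    refine ⟨?_, ?_, ?_, ?_⟩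
    · rw [isUnit_iff_ne_zero, hdet, hec, hf0, hda]
      intro h
      have : 2*c^2*(b - a) = 0 := by linarith [h]
      rcases mul_eq_zero.mp this with h' | h'
      · rcases mul_eq_zero.mp h' with h'' | h''
        · norm_num at h''
        · exact hcne (pow_eq_zero_iff (n := 2) (by norm_num) |>.mp h'')
      · have hba : b = a := sub_eq_zero.mp h'
        exact hab hba.symm
    · rw [hec, hda]
    · rw [hf0, hec]; ring
    · rw [hf0, hec]; ring
end
end
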